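/- arXiv:math/0610674 — 6 statements merged into one kernel-verified Lean document; each statement's English description precedes it below -/
import Mathlib

section
/- Let (𝔫, ⟨·,·⟩) be a generalized Heisenberg (H-type) algebra with center 𝔷 and 𝔳 the orthogonal complement of 𝔷, and let z ∈ 𝔷 with z ≠ 0. Then the linear map (−‖z‖² ρ_z) ⊕ J_z on 𝔫 = 𝔷 ⊕ 𝔳, where ρ_z is the orthogonal reflection of 𝔷 across the hyperplane (ℝz)^⊥, is a Lie algebra automorphism of 𝔫. -/
open scoped RealInnerProductSpace

/-- For an H-type algebra `(𝔫, ⟨·,·⟩)` with center `𝔷 = Z`,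
`𝔳 = V = Zᗮ`, and `0 ≠ z ∈ 𝔷`, the map `(-‖z‖² ρ_z) ⊕ J_z` (where `ρ_z` is the
orthogonal reflection of `𝔷` across `(ℝz)ᗮ`) is a Lie algebra automorphism of `𝔫`.
Here `S` is the linear map acting as `-‖z‖² ρ` on `Z` and as `J z` on `V`. -/
theorem stmt5 {𝔫 : Type*} [NormedAddCommGroup 𝔫] [InnerProductSpace ℝ 𝔫]
    [FiniteDimensional ℝ 𝔫]
    (B : 𝔫 →ₗ[ℝ] 𝔫 →ₗ[ℝ] 𝔫)
    (hanti : ∀ x y, B x y = -B y x)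
    (hjacobi : ∀ x y z, B (B x y) z + B (B y z) x + B (B z x) y = 0)
    (htwostep : ∀ x y w, B x (B y w) = 0)
    (Z : Submodule ℝ 𝔫) (hZ : ∀ x, x ∈ Z ↔ ∀ y, B x y = 0)
    (V : Submodule ℝ 𝔫) (hV : V = Zᗮ)
    (J : Z → (V →ₗ[ℝ] V))
    (hJ : ∀ (z : Z) (v u : V), ⟪(J z v : 𝔫), (u : 𝔫)⟫ = ⟪(z : 𝔫), B v u⟫)
    (hH : ∀ (z : Z) (v : V), J z (J z v) = -⟪(z : 𝔫), (z : 𝔫)⟫ • v)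
    (z : Z) (hz : z ≠ 0)
    (ρ : Z →ₗ[ℝ] Z)
    (hρ1 : ρ z = -z)
    (hρ2 : ∀ w : Z, ⟪w, z⟫ = 0 → ρ w = w)
    (S : 𝔫 →ₗ[ℝ] 𝔫)
    (hS1 : ∀ w : Z, S w = ((-‖z‖ ^ 2 • ρ w : Z) : 𝔫))
    (hS2 : ∀ v : V, S v = (J z v : 𝔫)) :
    Function.Bijective S ∧ ∀ x y, S (B x y) = B (S x) (S y) := by
  classical
  -- basic facts about z
  have hcn : ‖(z : 𝔫)‖ = ‖z‖ := rfl
  have hzn : (z : 𝔫) ≠ 0 := by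
    intro h
    exact hz (Submodule.coe_eq_zero.mp h)
  have hnz : ‖z‖ ≠ 0 := by rw [← hcn]; exact norm_ne_zero_iff.mpr hzn
  have hzz : ⟪(z:𝔫), (z:𝔫)⟫ = ‖z‖ ^ 2 := by
    rw [real_inner_self_eq_norm_sq, hcn]
  have hzz_ne : ⟪(z:𝔫), (z:𝔫)⟫ ≠ 0 := by
    rw [hzz]; exact pow_ne_zero 2 hnz
  -- brackets land in the center
  have hBZ : ∀ x y, B x y ∈ Z := fun x y =>
    (hZ _).mpr (fun w => by rw [hanti, htwostep, neg_zero])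
  have hZ0 : ∀ a ∈ Z, ∀ y, B a y = 0 := fun a ha => (hZ a).mp ha
  have hZ0' : ∀ a ∈ Z, ∀ y, B y a = 0 := fun a ha y => by
    rw [hanti, hZ0 a ha, neg_zero]
  -- decomposition
  have hdecomp : ∀ x : 𝔫, ∃ a ∈ Z, ∃ b ∈ Zᗮ, x = a + b :=
    fun x => Z.exists_add_mem_mem_orthogonal x
  -- extensionality in V
  have hVext : ∀ a b : V, (∀ u : V, ⟪(a:𝔫),(u:𝔫)⟫ = ⟪(b:𝔫),(u:𝔫)⟫) → a = b := by
    intro a b h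
    exact ext_inner_right ℝ (fun u => h u)
  -- additivity of J in the central variable
  have hJadd : ∀ (w₁ w₂ : Z) (v : V), J (w₁ + w₂) v = J w₁ v + J w₂ v := by
    intro w₁ w₂ v
    apply hVext
    intro u
    rw [hJ, Submodule.coe_add, Submodule.coe_add, inner_add_left, inner_add_left,
      hJ, hJ]
  -- skew-symmetry of each J w
  have hskew : ∀ (w : Z) (a b : V), ⟪((J w a : V):𝔫), (b:𝔫)⟫ = -⟪(a:𝔫), ((J w b:V):𝔫)⟫ := by
    intro w a b
    have h3 : ⟪(w:𝔫), B b a⟫ = -⟪(w:𝔫), B a b⟫ := by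
      rw [hanti (b:𝔫) (a:𝔫), inner_neg_right]
    have e3 : ⟪(a:𝔫), ((J w b : V):𝔫)⟫ = ⟪((J w b : V):𝔫), (a:𝔫)⟫ :=
      real_inner_comm _ _
    rw [hJ, e3, hJ, h3, neg_neg]
  -- ⟪J z a, J z b⟫ = ⟪z,z⟫⟪a,b⟫
  have hJJ : ∀ (a b : V), ⟪((J z a:V):𝔫), ((J z b:V):𝔫)⟫ = ⟪(z:𝔫),(z:𝔫)⟫ * ⟪(a:𝔫),(b:𝔫)⟫ := by
    intro a b
    rw [hskew z a (J z b), hH, Submodule.coe_smul, inner_smul_right]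
    ring
  -- anticommutation relation
  have hAC : ∀ (w : Z) (v : V), J w (J z v) + J z (J w v) = (-2 * ⟪(z:𝔫),(w:𝔫)⟫) • v := by
    intro w v
    have h := hH (z + w) v
    simp only [hJadd z w, map_add] at h
    rw [hH z v, hH w v, Submodule.coe_add, real_inner_add_add_self] at h
    have hsym : ⟪(w:𝔫),(z:𝔫)⟫ = ⟪(z:𝔫),(w:𝔫)⟫ := real_inner_comm _ _
    linear_combination (norm := module) h
  -- formula for the reflection
  have hρ : ∀ m : Z, ρ m = m - (2 * ⟪(z:𝔫), (m:𝔫)⟫ / ‖z‖^2) • z := by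
    intro m
    set c : ℝ := ⟪(z:𝔫),(m:𝔫)⟫ / ‖z‖^2 with hc
    have hcz : c * ⟪(z:𝔫),(z:𝔫)⟫ = ⟪(z:𝔫),(m:𝔫)⟫ := by
      rw [hzz, hc, div_mul_cancel₀ _ (pow_ne_zero 2 hnz)]
    have hm' : ⟪m - c•z, z⟫ = 0 := by
      rw [Submodule.coe_inner, Submodule.coe_sub, Submodule.coe_smul,
        inner_sub_left, real_inner_smul_left, hcz, real_inner_comm]
      ring
    have hfix := hρ2 _ hm'
    have : ρ m = ρ (m - c • z) + c • ρ z := by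
      rw [← map_smul, ← map_add]
      congr 1
      abel
    rw [this, hfix, hρ1]
    rw [show 2 * ⟪(z:𝔫), (m:𝔫)⟫ / ‖z‖^2 = 2 * c by rw [hc]; ring]
    module
  -- the key identity on V × V
  have hmain : ∀ (u v : V), S (B u v) = B (S u) (S v) := by
    intro u v
    have hm : B (u:𝔫) (v:𝔫) ∈ Z := hBZ _ _
    rw [hS2 u, hS2 v]
    rw [show B (u:𝔫) (v:𝔫) = ((⟨B (u:𝔫) (v:𝔫), hm⟩ : Z) : 𝔫) from rfl, hS1]
    set m : Z := ⟨B (u:𝔫) (v:𝔫), hm⟩ with hmdef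
    apply ext_inner_left ℝ
    intro w
    obtain ⟨a, ha, b, hb, rfl⟩ := hdecomp w
    rw [inner_add_left, inner_add_left]
    have hbL : ∀ x : 𝔫, x ∈ Z → ⟪b, x⟫ = 0 := by
      intro x hx
      rw [real_inner_comm]
      exact (Submodule.mem_orthogonal Z b).mp hb x hx
    rw [hbL _ (SetLike.coe_mem _), hbL _ (hBZ _ _)]
    congr 1
    -- now the central part
    set az : Z := ⟨a, ha⟩ with hazdef
    have hJrel : J az (J z u) = (-2 * ⟪(z:𝔫),(a:𝔫)⟫) • u - J z (J az u) :=
      eq_sub_of_add_eq (hAC az u)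
    have hRHS : ⟪a, B ((J z u : V):𝔫) ((J z v : V):𝔫)⟫
        = 2 * ⟪(z:𝔫),(a:𝔫)⟫ * ⟪(z:𝔫), B (u:𝔫) (v:𝔫)⟫
          - ⟪(z:𝔫),(z:𝔫)⟫ * ⟪(a:𝔫), B (u:𝔫) (v:𝔫)⟫ := by
      have h1 : ⟪a, B ((J z u : V):𝔫) ((J z v : V):𝔫)⟫
          = ⟪((J az (J z u) : V):𝔫), ((J z v : V):𝔫)⟫ := (hJ az (J z u) (J z v)).symm
      rw [h1, hJrel]
      rw [Submodule.coe_sub, Submodule.coe_smul, inner_sub_left, real_inner_smul_left]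
      have h2 : ⟪(u:𝔫), ((J z v : V):𝔫)⟫ = -⟪(z:𝔫), B (u:𝔫) (v:𝔫)⟫ := by
        rw [← neg_eq_iff_eq_neg, ← hskew z u v, hJ]
      have h3 : ⟪((J z (J az u) : V):𝔫), ((J z v : V):𝔫)⟫
          = ⟪(z:𝔫),(z:𝔫)⟫ * ⟪(a:𝔫), B (u:𝔫) (v:𝔫)⟫ := by
        rw [hJJ, hJ]
      rw [h2, h3]
      ring
    rw [hRHS]
    -- left side
    rw [hρ m]
    have hcz : (2 * ⟪(z:𝔫),(m:𝔫)⟫ / ‖z‖^2) * ‖z‖^2 = 2 * ⟪(z:𝔫),(m:𝔫)⟫ :=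
      div_mul_cancel₀ _ (pow_ne_zero 2 hnz)
    rw [show ((-‖z‖ ^ 2 • (m - (2 * ⟪(z:𝔫), (m:𝔫)⟫ / ‖z‖^2) • z) : Z) : 𝔫)
        = -‖z‖^2 • (m:𝔫) + (2 * ⟪(z:𝔫),(m:𝔫)⟫ / ‖z‖^2 * ‖z‖^2) • (z:𝔫) by
      push_cast
      module]
    rw [hcz, inner_add_right, real_inner_smul_right, real_inner_smul_right]
    have hma : ((m:Z):𝔫) = B (u:𝔫) (v:𝔫) := rfl
    rw [hma, hzz, real_inner_comm (a:𝔫) (z:𝔫)]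
    ring
  -- membership facts about S
  have hSZ : ∀ a ∈ Z, S a ∈ Z := by
    intro a ha
    rw [show a = ((⟨a, ha⟩ : Z) : 𝔫) from rfl, hS1]
    exact SetLike.coe_mem _
  -- the multiplicativity on all of 𝔫
  have hmul : ∀ x y, S (B x y) = B (S x) (S y) := by
    intro x y
    obtain ⟨a, ha, b, hb, rfl⟩ := hdecomp x
    obtain ⟨a', ha', b', hb', rfl⟩ := hdecomp y
    have hbV : b ∈ V := hV ▸ hb
    have hbV' : b' ∈ V := hV ▸ hb'
    have hB1 : B (a + b) (a' + b') = B b b' := by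
      simp [hZ0 a ha, hZ0' a' ha']
    have hB2 : B (S (a + b)) (S (a' + b')) = B (S b) (S b') := by
      simp [hZ0 _ (hSZ a ha), hZ0' _ (hSZ a' ha')]
    rw [hB1, hB2]
    exact hmain ⟨b, hbV⟩ ⟨b', hbV'⟩
  refine ⟨?_, hmul⟩
  -- bijectivity
  have hinj : Function.Injective S := by
    rw [← LinearMap.ker_eq_bot]
    rw [Submodule.eq_bot_iff]
    intro x hx
    rw [LinearMap.mem_ker] at hx
    obtain ⟨a, ha, b, hb, rfl⟩ := hdecomp x
    have hbV : b ∈ V := hV ▸ hb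
    set az : Z := ⟨a, ha⟩ with hazdef
    set bv : V := ⟨b, hbV⟩ with hbvdef
    have hx' : ((-‖z‖ ^ 2 • ρ az : Z) : 𝔫) + ((J z bv : V) : 𝔫) = 0 := by
      rw [← hS1, ← hS2]
      rw [map_add] at hx
      exact hx
    -- the two components vanish separately
    have h1 : ((-‖z‖ ^ 2 • ρ az : Z) : 𝔫) = 0 ∧ ((J z bv : V) : 𝔫) = 0 := by
      have hmem1 : ((-‖z‖ ^ 2 • ρ az : Z) : 𝔫) ∈ Z := SetLike.coe_mem _
      have hmem2 : ((-‖z‖ ^ 2 • ρ az : Z) : 𝔫) ∈ Zᗮ := by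
        have : ((-‖z‖ ^ 2 • ρ az : Z) : 𝔫) = -((J z bv : V) : 𝔫) := by
          linear_combination (norm := module) hx'
        rw [this]
        exact neg_mem (hV ▸ SetLike.coe_mem (J z bv))
      have hzero : ((-‖z‖ ^ 2 • ρ az : Z) : 𝔫) = 0 := by
        have := Z.orthogonal_disjoint
        rw [disjoint_iff] at this
        have hm : ((-‖z‖ ^ 2 • ρ az : Z) : 𝔫) ∈ Z ⊓ Zᗮ := ⟨hmem1, hmem2⟩
        rw [this] at hm
        exact hm
      refine ⟨hzero, ?_⟩
      linear_combination (norm := module) hx' - hzero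
    -- b = 0
    have hb0 : bv = 0 := by
      have hJ0 : J z bv = 0 := by
        have := h1.2
        exact_mod_cast this
      have hh := hH z bv
      rw [hJ0, map_zero] at hh
      have hbv : -⟪(z:𝔫),(z:𝔫)⟫ • bv = 0 := hh.symm
      rw [neg_smul, neg_eq_zero] at hbv
      exact (smul_eq_zero.mp hbv).resolve_left hzz_ne
    -- a = 0
    have ha0 : az = 0 := by
      have hρ0 : ρ az = 0 := by
        have h2 : (-‖z‖ ^ 2 • ρ az : Z) = 0 := by exact_mod_cast h1.1
        rcases smul_eq_zero.mp h2 with h | h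
        · exact absurd h (neg_ne_zero.mpr (pow_ne_zero 2 hnz))
        · exact h
      rw [hρ az] at hρ0
      have haz : az = (2 * ⟪(z:𝔫), (az:𝔫)⟫ / ‖z‖^2) • z := sub_eq_zero.mp hρ0
      have hia : ⟪(z:𝔫), (az:𝔫)⟫ = 0 := by
        have h4 : ⟪(z:𝔫), (az:𝔫)⟫
            = (2 * ⟪(z:𝔫),(az:𝔫)⟫ / ‖z‖^2) * ⟪(z:𝔫),(z:𝔫)⟫ := by
          conv_lhs => rw [haz]
          rw [Submodule.coe_smul, real_inner_smul_right]
        rw [hzz, div_mul_cancel₀ _ (pow_ne_zero 2 hnz)] at h4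
        linarith
      rw [haz, hia]
      simp
    have haa : a = 0 := by exact congrArg Subtype.val ha0
    have hbb : b = 0 := by exact congrArg Subtype.val hb0
    rw [haa, hbb, add_zero]
  exact ⟨hinj, (LinearMap.injective_iff_surjective).mp hinj⟩
end

section
/- Let V be a finite-dimensional real inner product space of dimension m ≥ 1, and for a unit vector z ∈ V let ρ_z denote the orthogonal reflection across the hyperplane (ℝz)^⊥. Then the subgroup of the orthogonal group O(V) generated by {−ρ_z : z ∈ V, ‖z‖ = 1} equals O(V) if m is even, and equals SO(V) if m is odd. -/
open scoped RealInnerProductSpace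
open Module Submodule

namespace Stmt6Aux

variable {V : Type*} [NormedAddCommGroup V] [InnerProductSpace ℝ V] [FiniteDimensional ℝ V]

/-- The forgetful monoid hom from linear isometry equivalences to linear equivalences. -/
def isoHom (V : Type*) [NormedAddCommGroup V] [InnerProductSpace ℝ V] :
    (V ≃ₗᵢ[ℝ] V) →* (V ≃ₗ[ℝ] V) where
  toFun f := f.toLinearEquiv
  map_one' := rfl
  map_mul' _ _ := rfl

/-- Generating set: reflections across lines spanned by unit vectors. -/
def S0 (V : Type*) [NormedAddCommGroup V] [InnerProductSpace ℝ V] [FiniteDimensional ℝ V] :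
    Set (V ≃ₗᵢ[ℝ] V) :=
  {g | ∃ z : V, ‖z‖ = 1 ∧ g = reflection (ℝ ∙ z)}

lemma neg_mul_comm' (g : V ≃ₗᵢ[ℝ] V) :
    (LinearIsometryEquiv.neg ℝ : V ≃ₗᵢ[ℝ] V) * g = g * LinearIsometryEquiv.neg ℝ := by
  ext x
  have h1 : ((LinearIsometryEquiv.neg ℝ : V ≃ₗᵢ[ℝ] V) * g) x = -(g x) := rfl
  have h2 : (g * (LinearIsometryEquiv.neg ℝ : V ≃ₗᵢ[ℝ] V)) x = g (-x) := rfl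
  rw [h1, h2, map_neg]

lemma neg_mul_neg' :
    (LinearIsometryEquiv.neg ℝ : V ≃ₗᵢ[ℝ] V) * LinearIsometryEquiv.neg ℝ = 1 := by
  ext x
  show -(-x) = x
  exact neg_neg x

lemma reflection_congr {K L : Submodule ℝ V} (h : K = L) :
    (reflection K : V ≃ₗᵢ[ℝ] V) = reflection L := by
  subst h
  rfl

lemma reflection_orth_eq (v : V) :
    reflection ((ℝ ∙ v)ᗮ) = (LinearIsometryEquiv.neg ℝ : V ≃ₗᵢ[ℝ] V) * reflection (ℝ ∙ v) := by
  rw [reflection_orthogonal]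
  rfl

lemma reflection_top_eq_one : reflection (⊤ : Submodule ℝ V) = 1 := by
  ext x
  exact reflection_mem_subspace_eq_self trivial

lemma reflection_zero_eq_one : reflection ((ℝ ∙ (0 : V))ᗮ) = 1 := by
  rw [reflection_congr (by rw [span_zero_singleton, bot_orthogonal_eq_top] :
    ((ℝ ∙ (0 : V))ᗮ : Submodule ℝ V) = ⊤), reflection_top_eq_one]

lemma Q_mem_S0 {v : V} (hv : v ≠ 0) : reflection (ℝ ∙ v) ∈ S0 V := by
  have hn : ‖v‖ ≠ 0 := norm_ne_zero_iff.2 hv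
  refine ⟨‖v‖⁻¹ • v, ?_, ?_⟩
  · rw [norm_smul, norm_inv, norm_norm, inv_mul_cancel₀ hn]
  · exact (reflection_congr (span_singleton_smul_eq (isUnit_iff_ne_zero.2 (inv_ne_zero hn)) v)).symm

lemma pair_mem {a b : V} (ha : a ≠ 0) (hb : b ≠ 0) :
    reflection ((ℝ ∙ a)ᗮ) * reflection ((ℝ ∙ b)ᗮ) ∈ Subgroup.closure (S0 V) := by
  rw [reflection_orth_eq, reflection_orth_eq]
  have key : ((LinearIsometryEquiv.neg ℝ : V ≃ₗᵢ[ℝ] V) * reflection (ℝ ∙ a)) *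
      ((LinearIsometryEquiv.neg ℝ : V ≃ₗᵢ[ℝ] V) * reflection (ℝ ∙ b)) =
      reflection (ℝ ∙ a) * reflection (ℝ ∙ b) := by
    rw [neg_mul_comm' (reflection (ℝ ∙ a))]
    rw [mul_assoc, ← mul_assoc (LinearIsometryEquiv.neg ℝ : V ≃ₗᵢ[ℝ] V), neg_mul_neg', one_mul]
  rw [key]
  exact mul_mem (Subgroup.subset_closure (Q_mem_S0 ha)) (Subgroup.subset_closure (Q_mem_S0 hb))

lemma even_prod_mem : ∀ (l : List V), Even l.length → (∀ v ∈ l, v ≠ 0) →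
    (l.map fun v => reflection ((ℝ ∙ v)ᗮ)).prod ∈ Subgroup.closure (S0 V)
  | [], _, _ => by simpa using one_mem _
  | [a], h, _ => by
    rw [List.length_singleton] at h
    exact absurd h (by decide)
  | a :: b :: t, h, hnz => by
    have ht : Even t.length := by
      rw [List.length_cons, List.length_cons, Nat.even_add_one, Nat.even_add_one, not_not] at h
      exact h
    have hmem := even_prod_mem t ht (fun v hv => hnz v (by simp [hv]))
    have hab := pair_mem (hnz a (by simp)) (hnz b (by simp))
    simp only [List.map_cons, List.prod_cons, ← mul_assoc]
    exact mul_mem hab hmem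

/-- The determinant as a group hom on linear isometry equivalences. -/
noncomputable def detHom (V : Type*) [NormedAddCommGroup V] [InnerProductSpace ℝ V] :
    (V ≃ₗᵢ[ℝ] V) →* ℝˣ :=
  LinearEquiv.det.comp (isoHom V)

lemma detHom_apply (g : V ≃ₗᵢ[ℝ] V) : detHom V g = LinearEquiv.det g.toLinearEquiv := rfl

lemma detHom_reflection_orth {v : V} (hv : v ≠ 0) :
    detHom V (reflection ((ℝ ∙ v)ᗮ)) = -1 := by
  rw [detHom_apply]
  have h := linearEquiv_det_reflection ((ℝ ∙ v)ᗮ)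
  rwa [Submodule.orthogonal_orthogonal, finrank_span_singleton hv, pow_one] at h

lemma detHom_reflection_line {z : V} (hz : ‖z‖ = 1) :
    detHom V (reflection (ℝ ∙ z)) = (-1) ^ (finrank ℝ V - 1) := by
  have hz0 : z ≠ 0 := by
    intro h; rw [h, norm_zero] at hz; norm_num at hz
  rw [detHom_apply]
  have h := linearEquiv_det_reflection (ℝ ∙ z)
  have hrk : finrank ℝ ((ℝ ∙ z)ᗮ : Submodule ℝ V) = finrank ℝ V - 1 := by
    have hsum := Submodule.finrank_add_finrank_orthogonal (K := (ℝ ∙ z : Submodule ℝ V))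
    rw [finrank_span_singleton hz0] at hsum
    omega
  rwa [hrk] at h

lemma mem_closure_of_det_one {φ : V ≃ₗᵢ[ℝ] V} (h : detHom V φ = 1) :
    φ ∈ Subgroup.closure (S0 V) := by
  classical
  obtain ⟨l, -, rfl⟩ := φ.reflections_generate_dim
  have hprod : ∀ L : List V,
      ((L.filter (fun v => v ≠ 0)).map fun v => reflection ((ℝ ∙ v)ᗮ)).prod =
        (L.map fun v => reflection ((ℝ ∙ v)ᗮ)).prod := by
    intro L
    induction L with
    | nil => rfl
    | cons a t ih =>
      by_cases ha : a = 0
      · subst ha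
        rw [List.filter_cons_of_neg (by simp), List.map_cons, List.prod_cons, ih,
          reflection_zero_eq_one, one_mul]
      · rw [List.filter_cons_of_pos (by simp [ha]), List.map_cons, List.map_cons,
          List.prod_cons, List.prod_cons, ih]
  set l' := l.filter (fun v => v ≠ 0) with hl'
  have hnz : ∀ v ∈ l', v ≠ 0 := by
    intro v hv
    have := (List.mem_filter.1 hv).2
    simpa using this
  have hdet : detHom V ((l.map fun v => reflection ((ℝ ∙ v)ᗮ)).prod) = (-1) ^ l'.length := by
    rw [← hprod l, map_list_prod, List.map_map]
    apply List.prod_eq_pow_card _ (-1 : ℝˣ) ?_ |>.trans ?_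
    · intro x hx
      obtain ⟨v, hv, rfl⟩ := List.mem_map.1 hx
      exact detHom_reflection_orth (hnz v hv)
    · rw [List.length_map]
  rw [h] at hdet
  have heven : Even l'.length := by
    have h2 : ((-1 : ℝ)) ^ l'.length = 1 := by
      have := congrArg Units.val hdet.symm
      simpa using this
    exact (neg_one_pow_eq_one_iff_even (by norm_num : (-1 : ℝ) ≠ 1)).1 h2
  rw [← hprod l]
  exact even_prod_mem l' heven hnz

lemma neg_mem_closure (heven : Even (finrank ℝ V)) :
    (LinearIsometryEquiv.neg ℝ : V ≃ₗᵢ[ℝ] V) ∈ Subgroup.closure (S0 V) := by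
  apply mem_closure_of_det_one
  have : (LinearIsometryEquiv.neg ℝ : V ≃ₗᵢ[ℝ] V) = reflection (⊥ : Submodule ℝ V) :=
    (reflection_bot).symm
  rw [this, detHom_apply]
  have h := linearEquiv_det_reflection (⊥ : Submodule ℝ V)
  rw [bot_orthogonal_eq_top, finrank_top] at h
  rw [h, heven.neg_one_pow]

lemma closure_eq_top (heven : Even (finrank ℝ V)) :
    Subgroup.closure (S0 V) = (⊤ : Subgroup (V ≃ₗᵢ[ℝ] V)) := by
  rw [eq_top_iff, ← LinearIsometryEquiv.reflections_generate, Subgroup.closure_le]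
  rintro _ ⟨v, rfl⟩
  show reflection ((ℝ ∙ v)ᗮ) ∈ Subgroup.closure (S0 V)
  by_cases hv : v = 0
  · subst hv
    rw [reflection_zero_eq_one]
    exact one_mem _
  · rw [reflection_orth_eq]
    exact mul_mem (neg_mem_closure heven) (Subgroup.subset_closure (Q_mem_S0 hv))

lemma closure_eq_ker (hodd : Odd (finrank ℝ V)) :
    Subgroup.closure (S0 V) = (detHom V).ker := by
  apply le_antisymm
  · rw [Subgroup.closure_le]
    rintro _ ⟨z, hz, rfl⟩
    rw [SetLike.mem_coe, MonoidHom.mem_ker, detHom_reflection_line hz]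
    have : Even (finrank ℝ V - 1) := by
      obtain ⟨k, hk⟩ := hodd
      simp [hk]
    rw [this.neg_one_pow]
  · intro φ hφ
    exact mem_closure_of_det_one (MonoidHom.mem_ker.1 hφ)

end Stmt6Aux

open Stmt6Aux

/-- Let `V` be a finite-dimensional real inner product space of
dimension `m ≥ 1`.  The subgroup of `GL(V)` generated by the maps `-ρ_z`, for `z` a
unit vector (where `-ρ_z` fixes `z` and is `-id` on `(ℝz)ᗮ`), equals `O(V)` if `m`
is even, and equals `SO(V)` if `m` is odd. -/
theorem stmt6 {V : Type*} [NormedAddCommGroup V] [InnerProductSpace ℝ V]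
    [FiniteDimensional ℝ V]
    (m : ℕ) (hm : 1 ≤ m) (hdim : Module.finrank ℝ V = m) :
    (Even m →
      (Subgroup.closure {f : V ≃ₗ[ℝ] V | ∃ z : V, ‖z‖ = 1 ∧ f z = z ∧
          ∀ w : V, ⟪w, z⟫ = 0 → f w = -w} : Set (V ≃ₗ[ℝ] V)) =
        {f : V ≃ₗ[ℝ] V | ∀ x y : V, ⟪f x, f y⟫ = ⟪x, y⟫}) ∧
    (Odd m →
      (Subgroup.closure {f : V ≃ₗ[ℝ] V | ∃ z : V, ‖z‖ = 1 ∧ f z = z ∧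
          ∀ w : V, ⟪w, z⟫ = 0 → f w = -w} : Set (V ≃ₗ[ℝ] V)) =
        {f : V ≃ₗ[ℝ] V | (∀ x y : V, ⟪f x, f y⟫ = ⟪x, y⟫) ∧
          LinearMap.det (f : V →ₗ[ℝ] V) = 1}) := by
  -- The generating set is the image of `S0` under `isoHom`.
  have hS : {f : V ≃ₗ[ℝ] V | ∃ z : V, ‖z‖ = 1 ∧ f z = z ∧
      ∀ w : V, ⟪w, z⟫ = 0 → f w = -w} = (isoHom V) '' (S0 V) := by
    ext f
    constructor
    · rintro ⟨z, hz1, hfz, hfw⟩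
      refine ⟨reflection (ℝ ∙ z), ⟨z, hz1, rfl⟩, ?_⟩
      apply LinearEquiv.ext
      intro x
      obtain ⟨y, hy, w, hw, rfl⟩ := (ℝ ∙ z : Submodule ℝ V).exists_add_mem_mem_orthogonal x
      have h1 : (isoHom V (reflection (ℝ ∙ z))) (y + w) = y + -w := by
        show (reflection (ℝ ∙ z)) (y + w) = y + -w
        rw [map_add, reflection_mem_subspace_eq_self hy,
          reflection_mem_subspace_orthogonalComplement_eq_neg hw]
      rw [h1, map_add]
      obtain ⟨c, rfl⟩ := Submodule.mem_span_singleton.1 hy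
      rw [map_smul, hfz, hfw w (Submodule.mem_orthogonal_singleton_iff_inner_left.1 hw)]
    · rintro ⟨g, ⟨z, hz1, rfl⟩, rfl⟩
      refine ⟨z, hz1, ?_, ?_⟩
      · show (reflection (ℝ ∙ z)) z = z
        exact reflection_mem_subspace_eq_self (Submodule.mem_span_singleton_self z)
      · intro w hw
        show (reflection (ℝ ∙ z)) w = -w
        exact reflection_mem_subspace_orthogonalComplement_eq_neg
          (Submodule.mem_orthogonal_singleton_iff_inner_left.2 hw)
  have hmap : (Subgroup.closure {f : V ≃ₗ[ℝ] V | ∃ z : V, ‖z‖ = 1 ∧ f z = z ∧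
      ∀ w : V, ⟪w, z⟫ = 0 → f w = -w} : Set (V ≃ₗ[ℝ] V)) =
      (isoHom V) '' (Subgroup.closure (S0 V) : Set (V ≃ₗᵢ[ℝ] V)) := by
    rw [hS, ← MonoidHom.map_closure, Subgroup.coe_map]
  constructor
  · intro heven
    rw [hmap, closure_eq_top (by rwa [hdim])]
    ext f
    constructor
    · rintro ⟨g, -, rfl⟩
      intro x y
      exact g.inner_map_map x y
    · intro hf
      exact ⟨(f : V ≃ₗ[ℝ] V).isometryOfInner hf, trivial,
        (f : V ≃ₗ[ℝ] V).isometryOfInner_toLinearEquiv hf⟩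
  · intro hodd
    rw [hmap, closure_eq_ker (by rwa [hdim])]
    ext f
    constructor
    · rintro ⟨g, hg, rfl⟩
      refine ⟨fun x y => g.inner_map_map x y, ?_⟩
      have h1 : detHom V g = 1 := MonoidHom.mem_ker.1 hg
      have h2 := congrArg Units.val h1
      rw [detHom_apply] at h2
      rw [LinearEquiv.coe_det, Units.val_one] at h2
      exact h2
    · rintro ⟨hinner, hdet⟩
      refine ⟨f.isometryOfInner hinner, ?_, f.isometryOfInner_toLinearEquiv hinner⟩
      rw [SetLike.mem_coe, MonoidHom.mem_ker, detHom_apply]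
      apply Units.ext
      rw [LinearEquiv.coe_det]
      rw [f.isometryOfInner_toLinearEquiv hinner]
      simpa using hdet
end

section
/- Let V be a finite-dimensional real inner product space of even dimension m ≥ 2, and for 0 ≠ z ∈ V let ρ_z denote the orthogonal reflection across the hyperplane (ℝz)^⊥. Then the subgroup of GL(V) generated by {−‖z‖² ρ_z : z ∈ V, z ≠ 0} equals the conformal group CO(V) = {c·k : c ∈ ℝ, c ≠ 0, k ∈ O(V)}. -/
open scoped RealInnerProductSpace

set_option linter.unusedSectionVars false

section Aux
variable {V : Type*} [NormedAddCommGroup V] [InnerProductSpace ℝ V] [FiniteDimensional ℝ V]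

/-- scaling by a nonzero constant, as a linear equivalence -/
noncomputable def scalE (c : ℝ) (hc : c ≠ 0) : V ≃ₗ[ℝ] V := LinearEquiv.smulOfNeZero ℝ V c hc

lemma scalE_apply (c : ℝ) (hc : c ≠ 0) (x : V) : scalE c hc x = c • x := rfl

lemma scalE_congr {a b : ℝ} (ha : a ≠ 0) (hb : b ≠ 0) (h : a = b) :
    (scalE a ha : V ≃ₗ[ℝ] V) = scalE b hb := by subst h; rfl

/-- reflection across the hyperplane orthogonal to `z`, as a linear equivalence -/
noncomputable def rf (z : V) : V ≃ₗ[ℝ] V := (Submodule.reflection (ℝ ∙ z)ᗮ).toLinearEquiv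

lemma rf_apply (z x : V) : rf z x = Submodule.reflection (ℝ ∙ z)ᗮ x := rfl

lemma rf_zero : (rf (0:V)) = 1 := by
  apply LinearEquiv.ext
  intro x
  show Submodule.reflection (ℝ ∙ (0:V))ᗮ x = x
  have hx : x ∈ (ℝ ∙ (0:V))ᗮ := by
    rw [Submodule.span_zero_singleton, Submodule.bot_orthogonal_eq_top]; trivial
  exact Submodule.reflection_mem_subspace_eq_self hx

lemma normsq_ne {z : V} (hz : z ≠ 0) : -‖z‖ ^ 2 ≠ (0:ℝ) :=
  neg_ne_zero.mpr (pow_ne_zero _ (norm_ne_zero_iff.mpr hz))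

noncomputable def gen (z : V) (hz : z ≠ 0) : V ≃ₗ[ℝ] V :=
  scalE (-‖z‖ ^ 2) (normsq_ne hz) * rf z

lemma gen_apply (z : V) (hz : z ≠ 0) (x : V) :
    gen z hz x = (-‖z‖ ^ 2) • Submodule.reflection (ℝ ∙ z)ᗮ x := rfl

lemma gen_apply_self (z : V) (hz : z ≠ 0) : gen z hz z = ‖z‖ ^ 2 • z := by
  rw [gen_apply, Submodule.reflection_orthogonalComplement_singleton_eq_neg, smul_neg, neg_smul, neg_neg]

lemma gen_apply_orth (z : V) (hz : z ≠ 0) {w : V} (hw : ⟪w, z⟫ = 0) :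
    gen z hz w = -‖z‖ ^ 2 • w := by
  rw [gen_apply, Submodule.reflection_mem_subspace_eq_self
    (Submodule.mem_orthogonal_singleton_iff_inner_left.mpr hw)]

/-- two linear equivalences agreeing on `z` and on `zᗮ` agree -/
lemma ext_of_agree {z : V} (hz : z ≠ 0) {f g : V ≃ₗ[ℝ] V} (h1 : f z = g z)
    (h2 : ∀ w, ⟪w, z⟫ = 0 → f w = g w) : f = g := by
  apply LinearEquiv.ext
  intro x
  have hz2 : (‖z‖:ℝ) ^ 2 ≠ 0 := pow_ne_zero _ (norm_ne_zero_iff.mpr hz)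
  set a : ℝ := ⟪x, z⟫ / ‖z‖ ^ 2 with ha
  have hw : ⟪x - a • z, z⟫ = 0 := by
    rw [inner_sub_left, real_inner_smul_left, real_inner_self_eq_norm_sq, ha]
    field_simp
    ring
  have hx : x = a • z + (x - a • z) := by abel
  have h3 := h2 _ hw
  conv_lhs => rw [hx]
  conv_rhs => rw [hx]
  rw [map_add, map_add, map_smul, map_smul, h1, h3]

lemma scalE_mul (a b : ℝ) (ha : a ≠ 0) (hb : b ≠ 0) :
    (scalE a ha : V ≃ₗ[ℝ] V) * scalE b hb = scalE (a*b) (mul_ne_zero ha hb) := by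
  apply LinearEquiv.ext
  intro x
  show scalE a ha (scalE b hb x) = _
  rw [scalE_apply, scalE_apply, scalE_apply, smul_smul]

lemma scalE_comm (c : ℝ) (hc : c ≠ 0) (f : V ≃ₗ[ℝ] V) :
    scalE c hc * f = f * scalE c hc := by
  apply LinearEquiv.ext
  intro x
  show scalE c hc (f x) = f (scalE c hc x)
  rw [scalE_apply, scalE_apply, map_smul]

lemma gen_sq (z : V) (hz : z ≠ 0) :
    gen z hz * gen z hz
      = scalE (‖z‖ ^ 2 * ‖z‖ ^ 2) (mul_ne_zero (neg_ne_zero.mp (normsq_ne hz))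
          (neg_ne_zero.mp (normsq_ne hz))) := by
  apply LinearEquiv.ext
  intro x
  show gen z hz (gen z hz x) = _
  rw [gen_apply, gen_apply, map_smul, Submodule.reflection_reflection, scalE_apply, smul_smul]
  ring_nf

/-- product of `gen`s over an orthonormal family applied to a basis vector -/
lemma prod_gen_orthonormal {ι : Type*} [DecidableEq ι] {b : ι → V} (hb : Orthonormal ℝ b)
    (l : List ι) (j : ι) :
    ((l.map (fun i => gen (b i) (hb.ne_zero i))).prod) (b j)
      = ((-1:ℝ) ^ (l.length + l.count j)) • b j := by
  induction l with
  | nil => simp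
  | cons i l ih =>
    rw [List.map_cons, List.prod_cons]
    show gen (b i) (hb.ne_zero i) (((l.map (fun i => gen (b i) (hb.ne_zero i))).prod) (b j)) = _
    rw [ih, map_smul]
    by_cases hij : i = j
    · subst hij
      rw [gen_apply_self, hb.1 i]
      rw [List.count_cons_self, List.length_cons]
      norm_num
      rw [pow_add, pow_add]
      ring_nf
    · have horth : ⟪b j, b i⟫ = 0 := hb.2 (Ne.symm hij)
      rw [gen_apply_orth _ _ horth, hb.1 i]
      rw [List.count_cons_of_ne hij, List.length_cons]
      norm_num
      rw [show l.length + 1 + List.count j l = (l.length + List.count j l) + 1 by ring, pow_succ]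
      module

/-- the conformal group as a subgroup of `GL(V)` -/
def CO : Subgroup (V ≃ₗ[ℝ] V) where
  carrier := {f : V ≃ₗ[ℝ] V | ∃ (c : ℝ) (k : V ≃ₗ[ℝ] V), c ≠ 0 ∧
      (∀ x y : V, ⟪k x, k y⟫ = ⟪x, y⟫) ∧ ∀ x : V, f x = c • k x}
  one_mem' := ⟨1, 1, one_ne_zero, by intro x y; rfl, by intro x; simp⟩
  mul_mem' := by
    rintro f g ⟨c, k, hc, hk, hf⟩ ⟨d, l, hd, hl, hg⟩
    refine ⟨c * d, k * l, mul_ne_zero hc hd, ?_, ?_⟩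
    · intro x y
      show ⟪k (l x), k (l y)⟫ = _
      rw [hk, hl]
    · intro x
      show f (g x) = _
      rw [hg, hf, map_smul, smul_smul]
      rfl
  inv_mem' := by
    rintro f ⟨c, k, hc, hk, hf⟩
    refine ⟨c⁻¹, k⁻¹, inv_ne_zero hc, ?_, ?_⟩
    · intro x y
      have : ⟪k (k⁻¹ x), k (k⁻¹ y)⟫ = ⟪k⁻¹ x, k⁻¹ y⟫ := hk _ _
      rw [← this]
      show ⟪k (k.symm x), k (k.symm y)⟫ = _
      rw [k.apply_symm_apply, k.apply_symm_apply]
    · intro x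
      have : f (c⁻¹ • k⁻¹ x) = x := by
        rw [hf, map_smul, smul_smul, mul_inv_cancel₀ hc, one_smul]
        show k (k.symm x) = x
        exact k.apply_symm_apply x
      show f.symm x = _
      conv_lhs => rw [← this]
      rw [f.symm_apply_apply]

/-- the generating set -/
def Sgen : Set (V ≃ₗ[ℝ] V) :=
  {f : V ≃ₗ[ℝ] V | ∃ z : V, z ≠ 0 ∧ f z = ‖z‖ ^ 2 • z ∧
      ∀ w : V, ⟪w, z⟫ = 0 → f w = -‖z‖ ^ 2 • w}

lemma gen_mem_Sgen (z : V) (hz : z ≠ 0) : gen z hz ∈ (Sgen : Set (V ≃ₗ[ℝ] V)) :=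
  ⟨z, hz, gen_apply_self z hz, fun _ hw => gen_apply_orth z hz hw⟩

lemma mem_Sgen_iff {f : V ≃ₗ[ℝ] V} :
    f ∈ (Sgen : Set (V ≃ₗ[ℝ] V)) ↔ ∃ (z : V) (hz : z ≠ 0), f = gen z hz := by
  constructor
  · rintro ⟨z, hz, h1, h2⟩
    refine ⟨z, hz, ext_of_agree hz ?_ ?_⟩
    · rw [h1, gen_apply_self]
    · intro w hw
      rw [h2 w hw, gen_apply_orth z hz hw]
  · rintro ⟨z, hz, rfl⟩
    exact gen_mem_Sgen z hz

/-- the product of reflections, transferred from isometry equivs to linear equivs -/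
lemma prod_reflection_toLinearEquiv (l : List V) :
    ((l.map fun v => Submodule.reflection (ℝ ∙ v)ᗮ).prod : V ≃ₗᵢ[ℝ] V).toLinearEquiv
      = (l.map rf).prod := by
  induction l with
  | nil => rfl
  | cons v l ih =>
    rw [List.map_cons, List.prod_cons, List.map_cons, List.prod_cons, ← ih]
    rfl

/-- generators are in `CO` -/
lemma Sgen_subset_CO : (Sgen : Set (V ≃ₗ[ℝ] V)) ⊆ (CO : Subgroup (V ≃ₗ[ℝ] V)) := by
  intro f hf
  obtain ⟨z, hz, rfl⟩ := mem_Sgen_iff.mp hf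
  refine ⟨-‖z‖ ^ 2, rf z, normsq_ne hz, ?_, ?_⟩
  · intro x y
    exact (Submodule.reflection (ℝ ∙ z)ᗮ).inner_map_map x y
  · intro x
    rfl

lemma scal_pos_mem {e : V} (he : e ≠ 0) {t : ℝ} (ht : 0 < t) :
    (scalE t ht.ne' : V ≃ₗ[ℝ] V) ∈ Subgroup.closure (Sgen : Set (V ≃ₗ[ℝ] V)) := by
  set s : ℝ := t ^ (((4:ℕ):ℝ))⁻¹ with hs_def
  have hs : 0 < s := Real.rpow_pos_of_pos ht _
  set z : V := s • ‖e‖⁻¹ • e with hz_def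
  have hz : z ≠ 0 :=
    smul_ne_zero hs.ne' (smul_ne_zero (inv_ne_zero (norm_ne_zero_iff.mpr he)) he)
  have hnz : ‖z‖ = s := by
    rw [hz_def, norm_smul, norm_smul, norm_inv, norm_norm, Real.norm_eq_abs, abs_of_pos hs,
      inv_mul_cancel₀ (norm_ne_zero_iff.mpr he), mul_one]
  have hzt : ‖z‖ ^ 2 * ‖z‖ ^ 2 = t := by
    rw [hnz, show s ^ 2 * s ^ 2 = s ^ (4:ℕ) by ring, hs_def]
    exact Real.rpow_inv_natCast_pow ht.le (by norm_num)
  have h2 := gen_sq z hz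
  rw [scalE_congr _ ht.ne' hzt] at h2
  rw [← h2]
  exact mul_mem (Subgroup.subset_closure (gen_mem_Sgen z hz))
    (Subgroup.subset_closure (gen_mem_Sgen z hz))

lemma neg_one_ne : (-1 : ℝ) ≠ 0 := by norm_num

lemma neg_one_mem {m : ℕ} (hm : 2 ≤ m) (hmeven : Even m) (hdim : Module.finrank ℝ V = m) :
    (scalE (-1) neg_one_ne : V ≃ₗ[ℝ] V) ∈ Subgroup.closure (Sgen : Set (V ≃ₗ[ℝ] V)) := by
  let b : OrthonormalBasis (Fin m) ℝ V := (stdOrthonormalBasis ℝ V).reindex (finCongr hdim)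
  have hb : Orthonormal ℝ (fun i => b i) := b.orthonormal
  set l : List (Fin m) := List.finRange m with hl_def
  set P : V ≃ₗ[ℝ] V := (l.map (fun i => gen (b i) (hb.ne_zero i))).prod with hP_def
  have hP : ∀ j, P (b j) = (-1 : ℝ) • b j := by
    intro j
    have h := prod_gen_orthonormal hb l j
    have hcount : l.count j = 1 :=
      List.count_eq_one_of_mem (List.nodup_finRange m) (List.mem_finRange j)
    have hlen : l.length = m := List.length_finRange
    rw [hcount, hlen] at h
    rw [hP_def, h]
    congr 1
    exact Odd.neg_one_pow (Even.add_one hmeven)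
  have hPeq : P = scalE (-1) neg_one_ne := by
    apply LinearEquiv.toLinearMap_injective
    apply b.toBasis.ext
    intro j
    rw [OrthonormalBasis.coe_toBasis]
    show P (b j) = scalE (-1) neg_one_ne (b j)
    rw [hP j, scalE_apply]
  rw [← hPeq, hP_def]
  apply Subgroup.list_prod_mem
  intro x hx
  rw [List.mem_map] at hx
  obtain ⟨i, -, rfl⟩ := hx
  exact Subgroup.subset_closure (gen_mem_Sgen _ _)

lemma scal_mem {e : V} (he : e ≠ 0) {m : ℕ} (hm : 2 ≤ m) (hmeven : Even m)
    (hdim : Module.finrank ℝ V = m) (t : ℝ) (ht : t ≠ 0) :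
    (scalE t ht : V ≃ₗ[ℝ] V) ∈ Subgroup.closure (Sgen : Set (V ≃ₗ[ℝ] V)) := by
  rcases ht.lt_or_gt with hneg | hpos
  · have hpos' : 0 < -t := neg_pos.mpr hneg
    have h := mul_mem (neg_one_mem hm hmeven hdim (V := V)) (scal_pos_mem he hpos')
    rw [scalE_mul, scalE_congr _ ht (by ring)] at h
    exact h
  · exact scal_pos_mem he hpos

lemma key_lemma {e : V} (he : e ≠ 0) {m : ℕ} (hm : 2 ≤ m) (hmeven : Even m)
    (hdim : Module.finrank ℝ V = m) (l : List V) :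
    ∀ (c : ℝ) (hc : c ≠ 0),
      (scalE c hc * (l.map rf).prod : V ≃ₗ[ℝ] V)
        ∈ Subgroup.closure (Sgen : Set (V ≃ₗ[ℝ] V)) := by
  induction l with
  | nil =>
    intro c hc
    simpa using scal_mem he hm hmeven hdim c hc
  | cons v l ih =>
    intro c hc
    rw [List.map_cons, List.prod_cons]
    by_cases hv : v = 0
    · subst hv
      rw [rf_zero, one_mul]
      exact ih c hc
    · have hc' : c * (-‖v‖ ^ 2)⁻¹ ≠ 0 := mul_ne_zero hc (inv_ne_zero (normsq_ne hv))
      have heq : (scalE c hc : V ≃ₗ[ℝ] V) * (rf v * (l.map rf).prod)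
          = gen v hv * (scalE (c * (-‖v‖ ^ 2)⁻¹) hc' * (l.map rf).prod) := by
        apply LinearEquiv.ext
        intro x
        show scalE c hc (rf v ((l.map rf).prod x))
          = gen v hv (scalE (c * (-‖v‖ ^ 2)⁻¹) hc' ((l.map rf).prod x))
        rw [scalE_apply, scalE_apply, gen_apply, map_smul, smul_smul, rf_apply]
        congr 1
        rw [mul_comm c ((-‖v‖ ^ 2)⁻¹), ← mul_assoc, mul_inv_cancel₀ (normsq_ne hv), one_mul]
      rw [heq]
      exact mul_mem (Subgroup.subset_closure (gen_mem_Sgen v hv)) (ih _ hc')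

lemma closure_eq_CO {m : ℕ} (hm : 2 ≤ m) (hmeven : Even m)
    (hdim : Module.finrank ℝ V = m) :
    Subgroup.closure (Sgen : Set (V ≃ₗ[ℝ] V)) = (CO : Subgroup (V ≃ₗ[ℝ] V)) := by
  apply le_antisymm
  · rw [Subgroup.closure_le]
    exact Sgen_subset_CO
  · intro f hf
    obtain ⟨c, k, hc, hk, hf⟩ := hf
    have hnt : Nontrivial V := by
      rw [← Module.finrank_pos_iff (R := ℝ)]
      omega
    obtain ⟨e, he⟩ := exists_ne (0 : V)
    obtain ⟨l, -, hl⟩ := (k.isometryOfInner hk).reflections_generate_dim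
    have hk2 : (k : V ≃ₗ[ℝ] V) = (l.map rf).prod := by
      rw [← prod_reflection_toLinearEquiv, ← hl]
      exact (k.isometryOfInner_toLinearEquiv hk).symm
    have hfe : f = scalE c hc * (l.map rf).prod := by
      apply LinearEquiv.ext
      intro x
      show f x = scalE c hc ((l.map rf).prod x)
      rw [hf x, scalE_apply, hk2]
    rw [hfe]
    exact key_lemma he hm hmeven hdim l c hc

end Aux


/-- Let `V` be a finite-dimensional real inner product space of even
dimension `m ≥ 2`.  The subgroup of `GL(V)` generated by the maps `-‖z‖² ρ_z` for
`0 ≠ z ∈ V` (where `-‖z‖² ρ_z` sends `z` to `‖z‖² z` and `w` to `-‖z‖² w` for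
`w ⊥ z`) equals the conformal group `CO(V) = {c·k : c ∈ ℝ, c ≠ 0, k ∈ O(V)}`. -/
theorem stmt7 {V : Type*} [NormedAddCommGroup V] [InnerProductSpace ℝ V]
    [FiniteDimensional ℝ V]
    (m : ℕ) (hm : 2 ≤ m) (hmeven : Even m) (hdim : Module.finrank ℝ V = m) :
    (Subgroup.closure {f : V ≃ₗ[ℝ] V | ∃ z : V, z ≠ 0 ∧ f z = ‖z‖ ^ 2 • z ∧
        ∀ w : V, ⟪w, z⟫ = 0 → f w = -‖z‖ ^ 2 • w} : Set (V ≃ₗ[ℝ] V)) =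
      {f : V ≃ₗ[ℝ] V | ∃ (c : ℝ) (k : V ≃ₗ[ℝ] V), c ≠ 0 ∧
        (∀ x y : V, ⟪k x, k y⟫ = ⟪x, y⟫) ∧ ∀ x : V, f x = c • k x} := by
  exact congrArg SetLike.coe (closure_eq_CO hm hmeven hdim)
end

section
/- Let m ≥ 1 and 1 ≤ r ≤ m. The map sending an invertible matrix u ∈ GL_r(ℝ) with rows u₁, …, u_r to the lattice ℤũ₁ + ⋯ + ℤũ_r in ℝ^m, where ũᵢ = (uᵢ, 0, …, 0) is uᵢ followed by m − r zeros, induces a well-defined bijection from the double coset space GL_r(ℤ)\GL_r(ℝ)/CO_r(ℝ) onto the set of rank-r lattices in ℝ^m modulo CO_m(ℝ)-equivalence. -/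
open scoped RealInnerProductSpace
open Matrix

/-- A lattice of rank `r` in `ℝ^m`: the additive subgroup generated by `r`
ℝ-linearly independent vectors. -/
def IsLatticeOfRank (m r : ℕ) (Λ : AddSubgroup (EuclideanSpace ℝ (Fin m))) : Prop :=
  ∃ v : Fin r → EuclideanSpace ℝ (Fin m),
    LinearIndependent ℝ v ∧ Λ = AddSubgroup.closure (Set.range v)

/-- Membership in the conformal group `CO(E) = {c·k : c ≠ 0, k ∈ O(E)}`. -/
def IsCO {E : Type*} [NormedAddCommGroup E] [InnerProductSpace ℝ E]
    (g : E →ₗ[ℝ] E) : Prop :=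
  ∃ (c : ℝ) (k : E →ₗ[ℝ] E), c ≠ 0 ∧ (∀ x y, ⟪k x, k y⟫ = ⟪x, y⟫) ∧ g = c • k

/-- `CO_m(ℝ)`-equivalence on the type of rank-`r` lattices in `ℝ^m`. -/
def LatticeRelRank (m r : ℕ)
    (Λ Λ' : {Λ : AddSubgroup (EuclideanSpace ℝ (Fin m)) // IsLatticeOfRank m r Λ}) :
    Prop :=
  ∃ g : EuclideanSpace ℝ (Fin m) →ₗ[ℝ] EuclideanSpace ℝ (Fin m),
    IsCO g ∧ Λ'.1 = AddSubgroup.map g.toAddMonoidHom Λ.1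

/-- The conformal group of `r × r` real matrices: `CO_r(ℝ) = {c·k : c ≠ 0, kᵀk = 1}`. -/
def COMatrix (r : ℕ) : Set (Matrix (Fin r) (Fin r) ℝ) :=
  {G | ∃ (c : ℝ) (k : Matrix (Fin r) (Fin r) ℝ), c ≠ 0 ∧ kᵀ * k = 1 ∧ G = c • k}

/-- The double-coset relation on `GL_r(ℝ)` given by `u ∼ v ⟺ u = C v G` with
`C ∈ GL_r(ℤ)` and `G ∈ CO_r(ℝ)`. -/
def GLRel (r : ℕ) (u v : GL (Fin r) ℝ) : Prop :=
  ∃ (C : GL (Fin r) ℤ) (G : Matrix (Fin r) (Fin r) ℝ), G ∈ COMatrix r ∧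
    (u : Matrix (Fin r) (Fin r) ℝ) =
      ((C : Matrix (Fin r) (Fin r) ℤ)).map Int.cast * (v : Matrix (Fin r) (Fin r) ℝ) * G

/-- The lattice `ℤũ₁ + ⋯ + ℤũ_r ⊆ ℝ^m` spanned by the rows of `u ∈ GL_r(ℝ)`,
each extended by `m - r` zeros. -/
noncomputable def rowLattice (m r : ℕ) (u : Matrix (Fin r) (Fin r) ℝ) :
    AddSubgroup (EuclideanSpace ℝ (Fin m)) :=
  AddSubgroup.closure (Set.range fun i : Fin r =>
    (WithLp.toLp 2 (fun j : Fin m => if hj : (j : ℕ) < r then u i ⟨j, hj⟩ else 0) :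
      EuclideanSpace ℝ (Fin m)))

namespace Stmt14Aux

open Finset

variable {m r : ℕ}

noncomputable def toLp (n : ℕ) : (Fin n → ℝ) ≃ₗ[ℝ] EuclideanSpace ℝ (Fin n) :=
  (WithLp.linearEquiv 2 ℝ (Fin n → ℝ)).symm

lemma toLp_apply {n : ℕ} (x : Fin n → ℝ) (j : Fin n) : toLp n x j = x j := rfl

lemma ofLp_apply {n : ℕ} (x : EuclideanSpace ℝ (Fin n)) (j : Fin n) :
    (toLp n).symm x j = x j := rfl

/-- Embedding `ℝ^r → ℝ^m` by appending zeros. -/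
noncomputable def embL (m r : ℕ) :
    EuclideanSpace ℝ (Fin r) →ₗ[ℝ] EuclideanSpace ℝ (Fin m) where
  toFun x := WithLp.toLp 2 (fun j => if hj : (j : ℕ) < r then x ⟨j, hj⟩ else 0)
  map_add' x y := by
    ext j
    by_cases hj : (j : ℕ) < r <;> simp [hj, PiLp.add_apply]
  map_smul' c x := by
    ext j
    by_cases hj : (j : ℕ) < r <;> simp [hj, PiLp.smul_apply]

/-- Projection `ℝ^m → ℝ^r` onto the first `r` coordinates. -/
noncomputable def projL (m r : ℕ) (hrm : r ≤ m) :
    EuclideanSpace ℝ (Fin m) →ₗ[ℝ] EuclideanSpace ℝ (Fin r) where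
  toFun x := WithLp.toLp 2 (fun i => x (Fin.castLE hrm i))
  map_add' x y := by ext i; simp [PiLp.add_apply]
  map_smul' c x := by ext i; simp [PiLp.smul_apply]

lemma embL_apply (x : EuclideanSpace ℝ (Fin r)) (j : Fin m) :
    embL m r x j = if hj : (j : ℕ) < r then x ⟨j, hj⟩ else 0 := rfl

lemma projL_apply (hrm : r ≤ m) (x : EuclideanSpace ℝ (Fin m)) (i : Fin r) :
    projL m r hrm x i = x (Fin.castLE hrm i) := rfl

lemma proj_emb (hrm : r ≤ m) (x : EuclideanSpace ℝ (Fin r)) :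
    projL m r hrm (embL m r x) = x := by
  ext i
  have h : ((Fin.castLE hrm i : Fin m) : ℕ) < r := i.isLt
  rw [projL_apply, embL_apply, dif_pos h]; rfl

lemma embL_inj (hrm : r ≤ m) : Function.Injective (embL m r) :=
  Function.LeftInverse.injective (proj_emb hrm)

lemma mem_range_embL (hrm : r ≤ m) {y : EuclideanSpace ℝ (Fin m)} :
    y ∈ LinearMap.range (embL m r) ↔ ∀ j : Fin m, r ≤ (j : ℕ) → y j = 0 := by
  constructor
  · rintro ⟨x, rfl⟩ j hj
    rw [embL_apply, dif_neg (Nat.not_lt.mpr hj)]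
  · intro h
    refine ⟨projL m r hrm y, ?_⟩
    ext j
    by_cases hj : (j : ℕ) < r
    · rw [embL_apply, dif_pos hj, projL_apply]; rfl
    · rw [embL_apply, dif_neg hj, h j (Nat.not_lt.mp hj)]

lemma inner_eq_sum (x y : EuclideanSpace ℝ (Fin m)) : ⟪x, y⟫ = ∑ j, x j * y j := by
  simp [PiLp.inner_apply, RCLike.inner_apply, conj_trivial]
  exact Finset.sum_congr rfl fun _ _ => mul_comm _ _

lemma inner_split (hrm : r ≤ m) (x y : EuclideanSpace ℝ (Fin m)) :
    ⟪x, y⟫ = ⟪projL m r hrm x, projL m r hrm y⟫ +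
      ∑ j ∈ Finset.univ.filter (fun j : Fin m => ¬ (j : ℕ) < r), x j * y j := by
  rw [inner_eq_sum, inner_eq_sum,
    ← Finset.sum_filter_add_sum_filter_not Finset.univ (fun j : Fin m => (j : ℕ) < r)
      (fun j => x j * y j)]
  congr 1
  refine Finset.sum_bij (fun (j : Fin m) hj => (⟨(j : ℕ), by simpa using hj⟩ : Fin r))
    ?_ ?_ ?_ ?_
  · intro a ha; exact Finset.mem_univ _
  · intro a ha b hb hab
    have : (a : ℕ) = (b : ℕ) := by simpa [Fin.ext_iff] using hab
    exact Fin.ext this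
  · intro i _
    refine ⟨Fin.castLE hrm i, by simp [i.isLt], rfl⟩
  · intro a ha
    rfl

lemma embL_inner (hrm : r ≤ m) (a b : EuclideanSpace ℝ (Fin r)) :
    ⟪embL m r a, embL m r b⟫ = ⟪a, b⟫ := by
  rw [inner_split hrm, proj_emb, proj_emb, Finset.sum_eq_zero, add_zero]
  intro j hj
  rw [Finset.mem_filter] at hj
  rw [embL_apply, dif_neg hj.2, zero_mul]

/-- The conformal extension to `ℝ^m` of right multiplication by `K` on `ℝ^r`. -/
noncomputable def kmap (hrm : r ≤ m) (K : Matrix (Fin r) (Fin r) ℝ) :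
    EuclideanSpace ℝ (Fin m) →ₗ[ℝ] EuclideanSpace ℝ (Fin m) :=
  (embL m r ∘ₗ ((toLp r).toLinearMap ∘ₗ K.vecMulLinear ∘ₗ (toLp r).symm.toLinearMap)
      ∘ₗ projL m r hrm)
  + (LinearMap.id - embL m r ∘ₗ projL m r hrm)

lemma kmap_apply (hrm : r ≤ m) (K : Matrix (Fin r) (Fin r) ℝ)
    (x : EuclideanSpace ℝ (Fin m)) (j : Fin m) :
    kmap hrm K x j =
      if hj : (j : ℕ) < r then ((toLp r).symm (projL m r hrm x) ᵥ* K) ⟨j, hj⟩ else x j := by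
  have : kmap hrm K x j =
      embL m r (toLp r ((toLp r).symm (projL m r hrm x) ᵥ* K)) j
        + (x j - embL m r (projL m r hrm x) j) := rfl
  rw [this]
  by_cases hj : (j : ℕ) < r
  · rw [dif_pos hj, embL_apply, embL_apply, dif_pos hj, dif_pos hj, toLp_apply,
      projL_apply]
    have : x (Fin.castLE hrm ⟨(j : ℕ), hj⟩) = x j := rfl
    rw [this, sub_self, add_zero]
  · rw [dif_neg hj, embL_apply, embL_apply, dif_neg hj, dif_neg hj, sub_zero, zero_add]

lemma kmap_embL (hrm : r ≤ m) (K : Matrix (Fin r) (Fin r) ℝ)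
    (z : EuclideanSpace ℝ (Fin r)) :
    kmap hrm K (embL m r z) = embL m r (toLp r ((toLp r).symm z ᵥ* K)) := by
  ext j
  rw [kmap_apply, proj_emb]
  by_cases hj : (j : ℕ) < r
  · rw [dif_pos hj, embL_apply, dif_pos hj, toLp_apply]
  · rw [dif_neg hj, embL_apply, dif_neg hj, embL_apply, dif_neg hj]

lemma proj_kmap (hrm : r ≤ m) (K : Matrix (Fin r) (Fin r) ℝ)
    (x : EuclideanSpace ℝ (Fin m)) :
    projL m r hrm (kmap hrm K x) = toLp r ((toLp r).symm (projL m r hrm x) ᵥ* K) := by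
  ext i
  rw [projL_apply, kmap_apply]
  have h : ((Fin.castLE hrm i : Fin m) : ℕ) < r := i.isLt
  rw [dif_pos h, toLp_apply]; rfl

lemma vecMul_inner {K : Matrix (Fin r) (Fin r) ℝ} (hK : Kᵀ * K = 1)
    (a b : Fin r → ℝ) :
    ⟪toLp r (a ᵥ* K), toLp r (b ᵥ* K)⟫ = ⟪toLp r a, toLp r b⟫ := by
  have h1 : K * Kᵀ = 1 := mul_eq_one_comm.mp hK
  have e : ∀ v : Fin r → ℝ, v ᵥ* K = Kᵀ *ᵥ v := fun v => by
    rw [← Matrix.transpose_transpose K, Matrix.vecMul_transpose, Matrix.transpose_transpose]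
  have hdot : ∀ v w : Fin r → ℝ, ⟪toLp r v, toLp r w⟫ = v ⬝ᵥ w := fun v w => by
    rw [inner_eq_sum]; simp [dotProduct, toLp_apply]
  rw [hdot, hdot, e, e, Matrix.dotProduct_mulVec, Matrix.vecMul_transpose,
    Matrix.mulVec_mulVec, h1, Matrix.one_mulVec]

lemma kmap_inner (hrm : r ≤ m) {K : Matrix (Fin r) (Fin r) ℝ} (hK : Kᵀ * K = 1)
    (x y : EuclideanSpace ℝ (Fin m)) :
    ⟪kmap hrm K x, kmap hrm K y⟫ = ⟪x, y⟫ := by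
  rw [inner_split hrm (kmap hrm K x) (kmap hrm K y), inner_split hrm x y]
  congr 1
  · rw [proj_kmap, proj_kmap]
    have h2 : ∀ z : EuclideanSpace ℝ (Fin r), toLp r ((toLp r).symm z) = z := fun z =>
      (toLp r).apply_symm_apply z
    calc ⟪toLp r ((toLp r).symm (projL m r hrm x) ᵥ* K),
          toLp r ((toLp r).symm (projL m r hrm y) ᵥ* K)⟫
        = ⟪toLp r ((toLp r).symm (projL m r hrm x)), toLp r ((toLp r).symm (projL m r hrm y))⟫ :=
          vecMul_inner hK _ _
      _ = ⟪projL m r hrm x, projL m r hrm y⟫ := by rw [h2, h2]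
  · refine Finset.sum_congr rfl ?_
    intro j hj
    rw [Finset.mem_filter] at hj
    rw [kmap_apply, kmap_apply, dif_neg hj.2, dif_neg hj.2]

lemma E_sum_apply {n : ℕ} {ι : Type*} (s : Finset ι) (f : ι → EuclideanSpace ℝ (Fin n))
    (j : Fin n) : (∑ i ∈ s, f i) j = ∑ i ∈ s, f i j := by
  classical
  induction s using Finset.cons_induction with
  | empty => simp
  | cons a s ha ih => rw [Finset.sum_cons, Finset.sum_cons, PiLp.add_apply, ih]

/-- The matrix whose rows are the images of the standard basis vectors under `t`. -/
noncomputable def matrixOf (t : EuclideanSpace ℝ (Fin r) →ₗ[ℝ] EuclideanSpace ℝ (Fin r)) :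
    Matrix (Fin r) (Fin r) ℝ :=
  Matrix.of fun i j => t (EuclideanSpace.single i 1) j

lemma vecMul_matrixOf (t : EuclideanSpace ℝ (Fin r) →ₗ[ℝ] EuclideanSpace ℝ (Fin r))
    (z : EuclideanSpace ℝ (Fin r)) :
    (toLp r).symm z ᵥ* matrixOf t = (toLp r).symm (t z) := by
  have hz : z = ∑ i, (z i) • EuclideanSpace.single i (1 : ℝ) := by
    ext l
    rw [E_sum_apply]
    simp [PiLp.smul_apply, EuclideanSpace.single_apply]
  funext j
  calc ((toLp r).symm z ᵥ* matrixOf t) j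
      = ∑ i, z i * t (EuclideanSpace.single i 1) j := by
        simp [Matrix.vecMul, dotProduct, matrixOf, ofLp_apply]
    _ = ∑ i, (z i • t (EuclideanSpace.single i (1 : ℝ))) j := by
        refine Finset.sum_congr rfl fun i _ => ?_
        rw [PiLp.smul_apply, smul_eq_mul]
    _ = (∑ i, z i • t (EuclideanSpace.single i (1 : ℝ))) j := (E_sum_apply _ _ _).symm
    _ = t z j := by
        conv_rhs => rw [hz]
        rw [_root_.map_sum]
        simp only [LinearMap.map_smul]

lemma vecMul_smul_mat (c : ℝ) (K : Matrix (Fin r) (Fin r) ℝ) (z : Fin r → ℝ) :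
    z ᵥ* (c • K) = c • (z ᵥ* K) := by
  funext j
  simp [Matrix.vecMul, dotProduct, Finset.mul_sum, Matrix.smul_apply,
    Pi.smul_apply, smul_eq_mul, mul_left_comm]

-- rowLattice in terms of embL
lemma rowLattice_eq (w : Matrix (Fin r) (Fin r) ℝ) :
    rowLattice m r w = AddSubgroup.closure (Set.range fun i => embL m r (toLp r (w i))) :=
  rfl

lemma map_rowLattice (g : EuclideanSpace ℝ (Fin m) →ₗ[ℝ] EuclideanSpace ℝ (Fin m))
    (w G : Matrix (Fin r) (Fin r) ℝ)
    (h : ∀ z : EuclideanSpace ℝ (Fin r),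
      g (embL m r z) = embL m r (toLp r ((toLp r).symm z ᵥ* G))) :
    AddSubgroup.map g.toAddMonoidHom (rowLattice m r w) = rowLattice m r (w * G) := by
  rw [rowLattice_eq, rowLattice_eq, AddMonoidHom.map_closure, ← Set.range_comp]
  have hfun : (⇑g.toAddMonoidHom ∘ fun i => embL m r (toLp r (w i))) =
      fun i => embL m r (toLp r ((w * G) i)) := by
    funext i
    show g (embL m r (toLp r (w i))) = embL m r (toLp r ((w * G) i))
    rw [h]
    congr 1
  rw [hfun]

lemma closure_range_le_of_int {M : Type*} [AddCommGroup M] {ι : Type*} [Fintype ι]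
    {A B : ι → M} (h : ∀ i, ∃ c : ι → ℤ, A i = ∑ k, c k • B k) :
    AddSubgroup.closure (Set.range A) ≤ AddSubgroup.closure (Set.range B) := by
  rw [AddSubgroup.closure_le, Set.range_subset_iff]
  intro i
  obtain ⟨c, hc⟩ := h i
  rw [SetLike.mem_coe, hc]
  exact AddSubgroup.sum_mem _ fun k _ =>
    AddSubgroup.zsmul_mem _ (AddSubgroup.subset_closure (Set.mem_range_self k)) _

lemma mem_closure_int {M : Type*} [AddCommGroup M] {ι : Type*} [Fintype ι]
    (B : ι → M) {x : M} (hx : x ∈ AddSubgroup.closure (Set.range B)) :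
    ∃ c : ι → ℤ, x = ∑ i, c i • B i := by
  have hle : AddSubgroup.closure (Set.range B) ≤ (Submodule.span ℤ (Set.range B)).toAddSubgroup :=
    (AddSubgroup.closure_le _).mpr (fun y hy => Submodule.subset_span hy)
  obtain ⟨c, hc⟩ := (Submodule.mem_span_range_iff_exists_fun ℤ).mp (hle hx)
  exact ⟨c, hc.symm⟩

lemma row_int_comb (C : Matrix (Fin r) (Fin r) ℤ) (w : Matrix (Fin r) (Fin r) ℝ) (i : Fin r) :
    embL m r (toLp r ((C.map (Int.cast : ℤ → ℝ) * w) i)) =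
      ∑ k, C i k • embL m r (toLp r (w k)) := by
  have h1 : toLp r ((C.map (Int.cast : ℤ → ℝ) * w) i) = ∑ k, ((C i k : ℝ)) • toLp r (w k) := by
    ext j
    rw [toLp_apply, E_sum_apply]
    simp [Matrix.mul_apply, Matrix.map_apply, PiLp.smul_apply, toLp_apply, smul_eq_mul]
  rw [h1, _root_.map_sum]
  refine Finset.sum_congr rfl fun k _ => ?_
  rw [LinearMap.map_smul, Int.cast_smul_eq_zsmul]

lemma rowLattice_int_mul_le (C : Matrix (Fin r) (Fin r) ℤ) (w : Matrix (Fin r) (Fin r) ℝ) :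
    rowLattice m r (C.map (Int.cast : ℤ → ℝ) * w) ≤ rowLattice m r w := by
  rw [rowLattice_eq, rowLattice_eq]
  exact closure_range_le_of_int fun i => ⟨fun k => C i k, row_int_comb C w i⟩

lemma rowLattice_int_mul (C : GL (Fin r) ℤ) (w : Matrix (Fin r) (Fin r) ℝ) :
    rowLattice m r ((C : Matrix (Fin r) (Fin r) ℤ).map (Int.cast : ℤ → ℝ) * w) = rowLattice m r w := by
  refine le_antisymm (rowLattice_int_mul_le _ _) ?_
  have h2 := rowLattice_int_mul_le (m := m)
    ((C⁻¹ : GL (Fin r) ℤ) : Matrix (Fin r) (Fin r) ℤ)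
    ((C : Matrix (Fin r) (Fin r) ℤ).map (Int.cast : ℤ → ℝ) * w)
  have h3 : ((C⁻¹ : GL (Fin r) ℤ) : Matrix (Fin r) (Fin r) ℤ).map (Int.cast : ℤ → ℝ) *
      ((C : Matrix (Fin r) (Fin r) ℤ).map (Int.cast : ℤ → ℝ) * w) = w := by
    rw [← mul_assoc]
    have : ((C⁻¹ : GL (Fin r) ℤ) : Matrix (Fin r) (Fin r) ℤ).map (Int.cast : ℤ → ℝ) *
        ((C : Matrix (Fin r) (Fin r) ℤ)).map (Int.cast : ℤ → ℝ) = 1 := by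
      have hco : (Int.cast : ℤ → ℝ) = ⇑(Int.castRingHom ℝ) := rfl
      rw [hco, ← Matrix.map_mul]
      have : ((C⁻¹ : GL (Fin r) ℤ) : Matrix (Fin r) (Fin r) ℤ) *
          ((C : Matrix (Fin r) (Fin r) ℤ)) = 1 := C.inv_mul
      rw [this]
      simp
    rw [this, one_mul]
  rwa [h3] at h2

lemma isLattice_rowLattice (hrm : r ≤ m) {u : Matrix (Fin r) (Fin r) ℝ} (hu : IsUnit u) :
    IsLatticeOfRank m r (rowLattice m r u) := by
  refine ⟨fun i => embL m r (toLp r (u i)), ?_, rowLattice_eq u⟩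
  have h1 : LinearIndependent ℝ (fun i => u i) := Matrix.linearIndependent_rows_iff_isUnit.mpr hu
  have h2 : LinearIndependent ℝ (fun i => toLp r (u i)) :=
    h1.map' (toLp r).toLinearMap (LinearMap.ker_eq_bot.mpr (toLp r).injective)
  exact h2.map' (embL m r) (LinearMap.ker_eq_bot.mpr (embL_inj hrm))

section CO

variable {E' : Type*} [NormedAddCommGroup E'] [InnerProductSpace ℝ E']

lemma isCO_id : IsCO (LinearMap.id : E' →ₗ[ℝ] E') :=
  ⟨1, LinearMap.id, one_ne_zero, fun _ _ => rfl, (one_smul _ _).symm⟩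

lemma IsCO.comp {g f : E' →ₗ[ℝ] E'} (hg : IsCO g) (hf : IsCO f) : IsCO (f.comp g) := by
  obtain ⟨c, k, hc, hk, rfl⟩ := hg
  obtain ⟨c', k', hc', hk', rfl⟩ := hf
  refine ⟨c' * c, k'.comp k, mul_ne_zero hc' hc, fun x y => ?_, ?_⟩
  · show ⟪k' (k x), k' (k y)⟫ = ⟪x, y⟫
    rw [hk', hk]
  · refine LinearMap.ext fun x => ?_
    show c' • k' ((c • k) x) = (c' * c) • k' (k x)
    rw [LinearMap.smul_apply, LinearMap.map_smul, smul_smul]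

end CO

lemma IsCO.inverse {n : ℕ} {g : EuclideanSpace ℝ (Fin n) →ₗ[ℝ] EuclideanSpace ℝ (Fin n)}
    (hg : IsCO g) :
    ∃ g' : EuclideanSpace ℝ (Fin n) →ₗ[ℝ] EuclideanSpace ℝ (Fin n),
      IsCO g' ∧ g'.comp g = LinearMap.id ∧ g.comp g' = LinearMap.id := by
  obtain ⟨c, k, hc, hk, rfl⟩ := hg
  have hki : Function.Injective k := by
    intro x y hxy
    have h := hk (x - y) (x - y)
    rw [map_sub, hxy, sub_self, inner_zero_left] at h
    have := inner_self_eq_zero.mp h.symm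
    exact sub_eq_zero.mp this
  have hks : Function.Surjective k := LinearMap.injective_iff_surjective.mp hki
  let e := LinearEquiv.ofBijective k ⟨hki, hks⟩
  have hke : ∀ z, k (e.symm z) = z := fun z => e.apply_symm_apply z
  have hek : ∀ z, e.symm (k z) = z := fun z => e.symm_apply_apply z
  refine ⟨c⁻¹ • e.symm.toLinearMap, ⟨c⁻¹, e.symm.toLinearMap, inv_ne_zero hc, ?_, rfl⟩, ?_, ?_⟩
  · intro x y
    have h := hk (e.symm x) (e.symm y)
    rw [hke, hke] at h
    exact h.symm
  · refine LinearMap.ext fun x => ?_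
    show c⁻¹ • e.symm ((c • k) x) = x
    rw [LinearMap.smul_apply, LinearEquiv.map_smul, hek, smul_smul, inv_mul_cancel₀ hc,
      one_smul]
  · refine LinearMap.ext fun x => ?_
    show (c • k) (c⁻¹ • e.symm x) = x
    rw [LinearMap.smul_apply, LinearMap.map_smul, hke, smul_smul, mul_inv_cancel₀ hc,
      one_smul]

lemma latticeRel_equiv (m r : ℕ) : Equivalence (LatticeRelRank m r) := by
  constructor
  · intro Λ
    exact ⟨LinearMap.id, isCO_id, by
      have : (LinearMap.id : EuclideanSpace ℝ (Fin m) →ₗ[ℝ] _).toAddMonoidHom =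
        AddMonoidHom.id _ := rfl
      rw [this, AddSubgroup.map_id]⟩
  · intro Λ Λ' ⟨g, hg, hmap⟩
    obtain ⟨g', hg', h1, _⟩ := IsCO.inverse hg
    refine ⟨g', hg', ?_⟩
    rw [hmap, AddSubgroup.map_map]
    have : g'.toAddMonoidHom.comp g.toAddMonoidHom = AddMonoidHom.id _ := by
      have h2 : (g'.comp g).toAddMonoidHom = g'.toAddMonoidHom.comp g.toAddMonoidHom := rfl
      rw [← h2, h1]; rfl
    rw [this, AddSubgroup.map_id]
  · intro Λ Λ' Λ'' ⟨g, hg, h1⟩ ⟨f, hf, h2⟩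
    refine ⟨f.comp g, IsCO.comp hg hf, ?_⟩
    rw [h2, h1, AddSubgroup.map_map]
    rfl

lemma wd (hrm : r ≤ m) (u v : GL (Fin r) ℝ) (h : GLRel r u v) :
    ∃ g : EuclideanSpace ℝ (Fin m) →ₗ[ℝ] EuclideanSpace ℝ (Fin m), IsCO g ∧
      rowLattice m r (u : Matrix (Fin r) (Fin r) ℝ) =
        AddSubgroup.map g.toAddMonoidHom (rowLattice m r (v : Matrix (Fin r) (Fin r) ℝ)) := by
  obtain ⟨C, G, ⟨c, K, hc, hK, rfl⟩, hEq⟩ := h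
  refine ⟨c • kmap hrm K, ⟨c, kmap hrm K, hc, kmap_inner hrm hK, rfl⟩, ?_⟩
  have hG : ∀ z : EuclideanSpace ℝ (Fin r),
      (c • kmap hrm K) (embL m r z) = embL m r (toLp r ((toLp r).symm z ᵥ* (c • K))) := by
    intro z
    rw [LinearMap.smul_apply, kmap_embL, vecMul_smul_mat]
    rw [← LinearMap.map_smul, ← LinearEquiv.map_smul]
  rw [map_rowLattice _ _ _ hG, hEq, mul_assoc, rowLattice_int_mul]

lemma span_closure_eq {M : Type*} [AddCommGroup M] [Module ℝ M] (S : Set M) :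
    Submodule.span ℝ ((AddSubgroup.closure S : AddSubgroup M) : Set M) = Submodule.span ℝ S := by
  refine le_antisymm ?_ (Submodule.span_mono AddSubgroup.subset_closure)
  rw [Submodule.span_le]
  intro x hx
  have hle : AddSubgroup.closure S ≤ (Submodule.span ℝ S).toAddSubgroup :=
    (AddSubgroup.closure_le _).mpr (fun y hy => Submodule.subset_span hy)
  exact hle hx

lemma span_rowLattice (hrm : r ≤ m) (w : GL (Fin r) ℝ) :
    Submodule.span ℝ ((rowLattice m r (w : Matrix (Fin r) (Fin r) ℝ) : AddSubgroup _) : Set _) =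
      LinearMap.range (embL m r) := by
  rw [rowLattice_eq, span_closure_eq]
  have h1 : (Set.range fun i => embL m r (toLp r ((w : Matrix (Fin r) (Fin r) ℝ) i))) =
      ⇑(embL m r) '' Set.range (fun i => toLp r ((w : Matrix (Fin r) (Fin r) ℝ) i)) := by
    rw [← Set.range_comp]
    rfl
  rw [h1, ← Submodule.map_span]
  have h2 : Submodule.span ℝ (Set.range fun i => toLp r ((w : Matrix (Fin r) (Fin r) ℝ) i)) =
      ⊤ := by
    rw [Submodule.eq_top_iff']
    intro x
    obtain ⟨cf, hcf⟩ := Matrix.vecMul_surjective_iff_isUnit.mpr w.isUnit ((toLp r).symm x)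
    have hx : x = ∑ i, cf i • toLp r ((w : Matrix (Fin r) (Fin r) ℝ) i) := by
      ext j
      rw [E_sum_apply]
      have := congrFun hcf j
      rw [← (toLp r).apply_symm_apply x, toLp_apply, ← this]
      simp [Matrix.vecMul, dotProduct, PiLp.smul_apply, toLp_apply, smul_eq_mul]
    rw [hx]
    exact Submodule.sum_mem _ fun i _ =>
      Submodule.smul_mem _ _ (Submodule.subset_span (Set.mem_range_self i))
  rw [h2, Submodule.map_top]

lemma inj_core (hrm : r ≤ m) (u v : GL (Fin r) ℝ)
    (hrel : ∃ g : EuclideanSpace ℝ (Fin m) →ₗ[ℝ] EuclideanSpace ℝ (Fin m), IsCO g ∧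
      rowLattice m r (v : Matrix (Fin r) (Fin r) ℝ) =
        AddSubgroup.map g.toAddMonoidHom (rowLattice m r (u : Matrix (Fin r) (Fin r) ℝ))) :
    GLRel r v u := by
  classical
  obtain ⟨g, ⟨c, k, hc, hk, rfl⟩, hmap⟩ := hrel
  set W : Submodule ℝ (EuclideanSpace ℝ (Fin m)) := LinearMap.range (embL m r) with hW_def
  -- map of W under g is W
  have hW : Submodule.map (c • k) W = W := by
    calc Submodule.map (c • k) W
        = Submodule.map (c • k)
            (Submodule.span ℝ ((rowLattice m r (u : Matrix (Fin r) (Fin r) ℝ) :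
              AddSubgroup _) : Set _)) := by rw [span_rowLattice hrm u]
      _ = Submodule.span ℝ (⇑(c • k) ''
            ((rowLattice m r (u : Matrix (Fin r) (Fin r) ℝ) : AddSubgroup _) : Set _)) :=
          Submodule.map_span _ _
      _ = Submodule.span ℝ ((rowLattice m r (v : Matrix (Fin r) (Fin r) ℝ) :
            AddSubgroup _) : Set _) := by
          rw [hmap, AddSubgroup.coe_map]; rfl
      _ = W := span_rowLattice hrm v
  -- k maps range embL to itself
  have hkW : ∀ z : EuclideanSpace ℝ (Fin r), ∃ y, embL m r y = k (embL m r z) := by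
    intro z
    have h1 : (c • k) (embL m r z) ∈ W := by
      rw [← hW]
      exact Submodule.mem_map_of_mem (LinearMap.mem_range.mpr ⟨z, rfl⟩)
    obtain ⟨y, hy⟩ := h1
    refine ⟨c⁻¹ • y, ?_⟩
    rw [LinearMap.map_smul, hy]
    show c⁻¹ • ((c • k) (embL m r z)) = k (embL m r z)
    rw [LinearMap.smul_apply, smul_smul, inv_mul_cancel₀ hc, one_smul]
  set s : EuclideanSpace ℝ (Fin r) →ₗ[ℝ] EuclideanSpace ℝ (Fin r) :=
    (projL m r hrm) ∘ₗ (k ∘ₗ embL m r) with hs_def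
  have hs : ∀ z, embL m r (s z) = k (embL m r z) := by
    intro z
    obtain ⟨y, hy⟩ := hkW z
    show embL m r (projL m r hrm (k (embL m r z))) = k (embL m r z)
    rw [← hy, proj_emb]
  have hsinner : ∀ a b : EuclideanSpace ℝ (Fin r), ⟪s a, s b⟫ = ⟪a, b⟫ := by
    intro a b
    rw [← embL_inner hrm (s a) (s b), hs, hs, hk, embL_inner hrm]
  set K := matrixOf s with hK_def
  have hKs : ∀ z : EuclideanSpace ℝ (Fin r), (toLp r).symm z ᵥ* K = (toLp r).symm (s z) :=
    vecMul_matrixOf s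
  have hK1 : Kᵀ * K = 1 := by
    rw [mul_eq_one_comm]
    ext i j
    have h1 : (K * Kᵀ) i j =
        ⟪s (EuclideanSpace.single i 1), s (EuclideanSpace.single j 1)⟫ := by
      rw [inner_eq_sum]
      simp [Matrix.mul_apply, Matrix.transpose_apply, matrixOf, hK_def]
    rw [h1, hsinner, EuclideanSpace.inner_single_left]
    simp [EuclideanSpace.single_apply, Matrix.one_apply, eq_comm]
  have hG : ∀ z : EuclideanSpace ℝ (Fin r),
      (c • k) (embL m r z) = embL m r (toLp r ((toLp r).symm z ᵥ* (c • K))) := by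
    intro z
    rw [vecMul_smul_mat, hKs, LinearMap.smul_apply, ← hs, ← LinearMap.map_smul,
      ← LinearEquiv.map_smul, (toLp r).apply_symm_apply]
  have hlat : rowLattice m r (v : Matrix (Fin r) (Fin r) ℝ) =
      rowLattice m r ((u : Matrix (Fin r) (Fin r) ℝ) * (c • K)) := by
    rw [hmap, map_rowLattice _ _ _ hG]
  -- integer change of basis
  set A : Fin r → EuclideanSpace ℝ (Fin m) :=
    fun i => embL m r (toLp r ((v : Matrix (Fin r) (Fin r) ℝ) i)) with hA_def
  set B : Fin r → EuclideanSpace ℝ (Fin m) :=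
    fun i => embL m r (toLp r (((u : Matrix (Fin r) (Fin r) ℝ) * (c • K)) i)) with hB_def
  have hAB : AddSubgroup.closure (Set.range A) = AddSubgroup.closure (Set.range B) := by
    rw [hA_def, hB_def, ← rowLattice_eq, ← rowLattice_eq]
    exact hlat
  have hmemA : ∀ i, A i ∈ AddSubgroup.closure (Set.range B) := fun i => by
    rw [← hAB]; exact AddSubgroup.subset_closure (Set.mem_range_self i)
  have hmemB : ∀ i, B i ∈ AddSubgroup.closure (Set.range A) := fun i => by
    rw [hAB]; exact AddSubgroup.subset_closure (Set.mem_range_self i)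
  choose n hn using fun i => mem_closure_int B (hmemA i)
  choose d hd using fun i => mem_closure_int A (hmemB i)
  have hA_li : LinearIndependent ℝ A := by
    have h1 : LinearIndependent ℝ (fun i => (v : Matrix (Fin r) (Fin r) ℝ) i) :=
      Matrix.linearIndependent_rows_iff_isUnit.mpr v.isUnit
    have h2 := h1.map' (toLp r).toLinearMap (LinearMap.ker_eq_bot.mpr (toLp r).injective)
    exact h2.map' (embL m r) (LinearMap.ker_eq_bot.mpr (embL_inj hrm))
  have huniq : ∀ cz : Fin r → ℤ, ∑ l, cz l • A l = 0 → ∀ l, cz l = 0 := by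
    intro cz h0 l
    have h0' : ∑ l, ((cz l : ℝ)) • A l = 0 := by
      rw [← h0]
      exact Finset.sum_congr rfl fun l _ => Int.cast_smul_eq_zsmul ℝ (cz l) (A l)
    exact_mod_cast (Fintype.linearIndependent_iff.mp hA_li) (fun l => (cz l : ℝ)) h0' l
  have key : ∀ i, A i = ∑ l, (∑ x, n i x * d x l) • A l := by
    intro i
    rw [hn i]
    calc ∑ x, n i x • B x = ∑ x, n i x • ∑ l, d x l • A l := by
          exact Finset.sum_congr rfl fun x _ => by rw [← hd x]
      _ = ∑ x, ∑ l, (n i x * d x l) • A l := by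
          refine Finset.sum_congr rfl fun x _ => ?_
          rw [Finset.smul_sum]
          exact Finset.sum_congr rfl fun l _ => smul_smul _ _ _
      _ = ∑ l, ∑ x, (n i x * d x l) • A l := Finset.sum_comm
      _ = ∑ l, (∑ x, n i x * d x l) • A l := by
          exact Finset.sum_congr rfl fun l _ => (Finset.sum_smul).symm
  have hnd : (Matrix.of n) * (Matrix.of d) = 1 := by
    ext i j
    have h1 : ∑ l, ((∑ x, n i x * d x l) - (if i = l then 1 else 0)) • A l = 0 := by
      rw [Finset.sum_congr rfl fun l _ => sub_smul _ _ (A l), Finset.sum_sub_distrib,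
        ← key i]
      have h2 : ∑ l, (if i = l then (1 : ℤ) else 0) • A l = A i := by
        simp
      rw [h2, sub_self]
    have h3 := huniq _ h1 j
    rw [sub_eq_zero] at h3
    show (Matrix.of n * Matrix.of d) i j = (1 : Matrix (Fin r) (Fin r) ℤ) i j
    rw [Matrix.mul_apply, Matrix.one_apply]
    exact h3
  have hdn : (Matrix.of d) * (Matrix.of n) = 1 := mul_eq_one_comm.mp hnd
  refine ⟨⟨Matrix.of n, Matrix.of d, hnd, hdn⟩, c • K, ⟨c, K, hc, hK1, rfl⟩, ?_⟩
  rw [mul_assoc]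
  ext i j
  have hni : toLp r ((v : Matrix (Fin r) (Fin r) ℝ) i) =
      ∑ x, n i x • toLp r (((u : Matrix (Fin r) (Fin r) ℝ) * (c • K)) x) := by
    apply embL_inj hrm
    rw [_root_.map_sum]
    have := hn i
    rw [hA_def, hB_def] at this
    simpa only [map_zsmul] using this
  have happ : (toLp r ((v : Matrix (Fin r) (Fin r) ℝ) i)) j =
      (∑ x, n i x • toLp r (((u : Matrix (Fin r) (Fin r) ℝ) * (c • K)) x)) j := by
    rw [hni]
  rw [toLp_apply, E_sum_apply] at happ
  show (v : Matrix (Fin r) (Fin r) ℝ) i j = _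
  rw [happ, Matrix.mul_apply]
  refine Finset.sum_congr rfl fun x _ => ?_
  rw [← Int.cast_smul_eq_zsmul ℝ, PiLp.smul_apply, toLp_apply, smul_eq_mul, Matrix.map_apply]
  rfl

lemma surj_core (hrm : r ≤ m) (Λ : AddSubgroup (EuclideanSpace ℝ (Fin m)))
    (hΛ : IsLatticeOfRank m r Λ) :
    ∃ (u : GL (Fin r) ℝ) (g : EuclideanSpace ℝ (Fin m) →ₗ[ℝ] EuclideanSpace ℝ (Fin m)),
      IsCO g ∧ Λ = AddSubgroup.map g.toAddMonoidHom
        (rowLattice m r (u : Matrix (Fin r) (Fin r) ℝ)) := by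
  classical
  obtain ⟨w, hw, rfl⟩ := hΛ
  set V : Submodule ℝ (EuclideanSpace ℝ (Fin m)) := Submodule.span ℝ (Set.range w) with hV_def
  have hVr : Module.finrank ℝ V = r := by
    rw [hV_def, finrank_span_eq_card hw, Fintype.card_fin]
  let oV : OrthonormalBasis (Fin r) ℝ V := (stdOrthonormalBasis ℝ V).reindex (finCongr hVr)
  set sset : Set (Fin m) := {j | (j : ℕ) < r} with hs_def
  set v' : Fin m → EuclideanSpace ℝ (Fin m) :=
    fun j => if hj : (j : ℕ) < r then (oV ⟨j, hj⟩ : EuclideanSpace ℝ (Fin m)) else 0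
    with hv'_def
  have hv' : Orthonormal ℝ (sset.restrict v') := by
    rw [orthonormal_iff_ite]
    intro a b
    have ha : ((a : Fin m) : ℕ) < r := a.2
    have hb : ((b : Fin m) : ℕ) < r := b.2
    have h1 : sset.restrict v' a = (oV ⟨(a : Fin m), ha⟩ : EuclideanSpace ℝ (Fin m)) := by
      show v' (a : Fin m) = _
      rw [hv'_def]
      exact dif_pos ha
    have h2 : sset.restrict v' b = (oV ⟨(b : Fin m), hb⟩ : EuclideanSpace ℝ (Fin m)) := by
      show v' (b : Fin m) = _
      rw [hv'_def]
      exact dif_pos hb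
    rw [h1, h2, ← Submodule.coe_inner, orthonormal_iff_ite.mp oV.orthonormal]
    by_cases hab : a = b
    · subst hab
      simp
    · have h3 : (⟨(a : Fin m), ha⟩ : Fin r) ≠ ⟨(b : Fin m), hb⟩ := by
        intro hcon
        apply hab
        have := congrArg Fin.val hcon
        exact Subtype.ext (Fin.ext this)
      rw [if_neg h3, if_neg hab]
  have hcard : Module.finrank ℝ (EuclideanSpace ℝ (Fin m)) = Fintype.card (Fin m) := by
    simp [finrank_euclideanSpace_fin]
  obtain ⟨b, hb⟩ := hv'.exists_orthonormalBasis_extension_of_card_eq hcard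
  have hbr : ∀ (j : Fin m) (hj : (j : ℕ) < r),
      b j = (oV ⟨j, hj⟩ : EuclideanSpace ℝ (Fin m)) := by
    intro j hj
    rw [hb j hj, hv'_def]
    exact dif_pos hj
  -- repr of elements of V lies in range embL
  have hbV : ∀ x : EuclideanSpace ℝ (Fin m), x ∈ V →
      b.repr x ∈ LinearMap.range (embL m r) := by
    intro x hx
    rw [mem_range_embL hrm]
    intro j hj
    rw [OrthonormalBasis.repr_apply_apply]
    set xV : V := ⟨x, hx⟩ with hxV_def
    have hxsum : x = ∑ i, oV.repr xV i • (oV i : EuclideanSpace ℝ (Fin m)) := by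
      have h4 := oV.sum_repr xV
      have h5 := congrArg (Submodule.subtype V) h4
      rw [_root_.map_sum] at h5
      simpa using h5.symm
    rw [hxsum, inner_sum]
    refine Finset.sum_eq_zero fun i _ => ?_
    rw [real_inner_smul_right]
    have h6 : (oV i : EuclideanSpace ℝ (Fin m)) = b (Fin.castLE hrm i) := by
      rw [hbr (Fin.castLE hrm i) i.isLt]
      congr 1
    rw [h6, orthonormal_iff_ite.mp b.orthonormal]
    have h7 : j ≠ Fin.castLE hrm i := by
      intro hcon
      rw [hcon] at hj
      exact absurd i.isLt (Nat.not_lt.mpr hj)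
    rw [if_neg h7, mul_zero]
  set urow : Fin r → EuclideanSpace ℝ (Fin r) :=
    fun i => projL m r hrm (b.repr (w i)) with hurow_def
  have hwV : ∀ i, w i ∈ V := fun i => Submodule.subset_span (Set.mem_range_self i)
  have hurow : ∀ i, embL m r (urow i) = b.repr (w i) := by
    intro i
    obtain ⟨y, hy⟩ := hbV (w i) (hwV i)
    have h8 : urow i = y := by
      show projL m r hrm (b.repr (w i)) = y
      rw [← hy, proj_emb]
    rw [h8, hy]
  set uM : Matrix (Fin r) (Fin r) ℝ := Matrix.of (fun i j => urow i j) with huM_def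
  have hrows : ∀ i, toLp r (uM i) = urow i := by
    intro i
    ext j
    rw [toLp_apply]
    rfl
  have hli : LinearIndependent ℝ urow := by
    have h1 : LinearIndependent ℝ (fun i => b.repr (w i)) :=
      hw.map' b.repr.toLinearEquiv.toLinearMap (LinearEquiv.ker _)
    refine LinearIndependent.of_comp (embL m r) ?_
    have h2 : (⇑(embL m r) ∘ urow) = fun i => b.repr (w i) := funext hurow
    rw [h2]
    exact h1
  have huUnit : IsUnit uM := by
    rw [← Matrix.linearIndependent_rows_iff_isUnit]
    change LinearIndependent ℝ (fun i => uM i)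
    have : (fun i => uM i) = fun i => (toLp r).symm (urow i) := by
      funext i
      rw [← hrows i, (toLp r).symm_apply_apply]
    rw [this]
    exact hli.map' (toLp r).symm.toLinearMap (LinearMap.ker_eq_bot.mpr (toLp r).symm.injective)
  obtain ⟨uU, huU⟩ := huUnit
  refine ⟨uU, b.repr.symm.toLinearEquiv.toLinearMap, ?_, ?_⟩
  · exact ⟨1, b.repr.symm.toLinearEquiv.toLinearMap, one_ne_zero,
      fun x y => b.repr.symm.inner_map_map x y, (one_smul _ _).symm⟩
  · rw [huU, rowLattice_eq, AddMonoidHom.map_closure, ← Set.range_comp]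
    have hfun : (⇑(b.repr.symm.toLinearEquiv.toLinearMap).toAddMonoidHom ∘
        fun i => embL m r (toLp r (uM i))) = w := by
      funext i
      show b.repr.symm.toLinearEquiv.toLinearMap (embL m r (toLp r (uM i))) = w i
      rw [hrows i, hurow i]
      exact b.repr.symm_apply_apply (w i)
    rw [hfun]

end Stmt14Aux

open Stmt14Aux in
/-- For `1 ≤ r ≤ m`, the map `u ↦ ℤũ₁ + ⋯ + ℤũ_r` induces a
well-defined bijection from `GL_r(ℤ)\GL_r(ℝ)/CO_r(ℝ)` onto the set of rank-`r`
lattices in `ℝ^m` modulo `CO_m(ℝ)`-equivalence. -/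
theorem stmt14 (m r : ℕ) (hr : 1 ≤ r) (hrm : r ≤ m) :
    ∃ F : Quot (GLRel r) → Quot (LatticeRelRank m r),
      Function.Bijective F ∧
      ∀ u : GL (Fin r) ℝ,
        ∃ hu : IsLatticeOfRank m r (rowLattice m r (u : Matrix (Fin r) (Fin r) ℝ)),
          F (Quot.mk _ u) =
            Quot.mk _ ⟨rowLattice m r (u : Matrix (Fin r) (Fin r) ℝ), hu⟩ := by
  classical
  have hlat : ∀ u : GL (Fin r) ℝ,
      IsLatticeOfRank m r (rowLattice m r (u : Matrix (Fin r) (Fin r) ℝ)) :=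
    fun u => isLattice_rowLattice hrm u.isUnit
  let f : GL (Fin r) ℝ → Quot (LatticeRelRank m r) :=
    fun u => Quot.mk _ ⟨rowLattice m r (u : Matrix (Fin r) (Fin r) ℝ), hlat u⟩
  have hresp : ∀ u v, GLRel r u v → f u = f v := by
    intro u v h
    obtain ⟨g, hg, hmap⟩ := wd hrm u v h
    exact (Quot.sound ⟨g, hg, hmap⟩).symm
  refine ⟨Quot.lift f hresp, ⟨?_, ?_⟩, fun u => ⟨hlat u, rfl⟩⟩
  · intro a b
    refine Quot.induction_on₂ a b ?_
    intro u v h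
    have h' := (Equivalence.eqvGen_iff (latticeRel_equiv m r)).mp (Quot.eq.mp h)
    obtain ⟨g, hg, hmap⟩ := h'
    exact (Quot.sound (inj_core hrm u v ⟨g, hg, hmap⟩)).symm
  · intro q
    induction q using Quot.ind with
    | _ p =>
    obtain ⟨Λ, hΛ⟩ := p
    obtain ⟨u, g, hg, hmap⟩ := surj_core hrm Λ hΛ
    exact ⟨Quot.mk _ u, Quot.sound ⟨g, hg, hmap⟩⟩
end

section
/- Let 1 ≤ r ≤ m and let Λ and Λ′ be lattices of rank r in ℝ^m, both contained in the subspace ℝ^r × {0} spanned by the first r standard basis vectors. If Λ′ = g(Λ) for some g ∈ CO_m(ℝ), then there exists g′ ∈ CO_r(ℝ) such that Λ′ = (g′ × id)(Λ), i.e. applying g′ to the first r coordinates maps Λ onto Λ′. -/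
open scoped RealInnerProductSpace
open Matrix

variable {m r : ℕ}

/-- Embedding ℝ^r → ℝ^m, zeros in tail. -/
def embedL (m r : ℕ) (hrm : r ≤ m) : EuclideanSpace ℝ (Fin r) →ₗ[ℝ] EuclideanSpace ℝ (Fin m) where
  toFun y := WithLp.toLp 2 (fun j => if h : (j : ℕ) < r then y ⟨j, h⟩ else 0)
  map_add' x y := PiLp.ext fun j => by by_cases h : (j : ℕ) < r <;> simp [h, PiLp.add_apply]
  map_smul' c x := PiLp.ext fun j => by by_cases h : (j : ℕ) < r <;> simp [h, PiLp.smul_apply]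

/-- Projection ℝ^m → ℝ^r, first r coordinates. -/
def projL (m r : ℕ) (hrm : r ≤ m) : EuclideanSpace ℝ (Fin m) →ₗ[ℝ] EuclideanSpace ℝ (Fin r) where
  toFun x := WithLp.toLp 2 (fun i => x (Fin.castLE hrm i))
  map_add' x y := PiLp.ext fun i => by simp [PiLp.add_apply]
  map_smul' c x := PiLp.ext fun i => by simp [PiLp.smul_apply]

lemma tail_sum (hrm : r ≤ m) (a b : EuclideanSpace ℝ (Fin m))
    (ha : ∀ j : Fin m, r ≤ (j : ℕ) → a j = 0) :
    ∑ i : Fin r, a (Fin.castLE hrm i) * b (Fin.castLE hrm i) = ∑ j : Fin m, a j * b j := by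
  have hm := Finset.sum_map Finset.univ (Fin.castLEEmb hrm) (fun j => a j * b j)
  simp only [Fin.castLEEmb_apply] at hm
  rw [← hm]
  refine Finset.sum_subset (Finset.subset_univ _) ?_
  intro j _ hj
  have : r ≤ (j : ℕ) := by
    by_contra h
    push_neg at h
    exact hj (Finset.mem_map.mpr ⟨⟨j, h⟩, Finset.mem_univ _, Fin.ext rfl⟩)
  rw [ha j this, zero_mul]

lemma mem_range_embedL (hrm : r ≤ m) (x : EuclideanSpace ℝ (Fin m)) :
    x ∈ LinearMap.range (embedL m r hrm) ↔ ∀ j : Fin m, r ≤ (j : ℕ) → x j = 0 := by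
  constructor
  · rintro ⟨y, rfl⟩ j hj
    simp [embedL, Nat.not_lt.mpr hj]
  · intro hx
    refine ⟨projL m r hrm x, PiLp.ext fun j => ?_⟩
    by_cases h : (j : ℕ) < r
    · show (if h : (j : ℕ) < r then _ else _) = x j
      rw [dif_pos h]
      exact congrArg x (Fin.ext rfl)
    · show (if h : (j : ℕ) < r then _ else _) = x j
      rw [dif_neg h]
      exact (hx j (Nat.not_lt.mp h)).symm

lemma projL_embedL (hrm : r ≤ m) (y : EuclideanSpace ℝ (Fin r)) :
    projL m r hrm (embedL m r hrm y) = y := by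
  refine PiLp.ext fun i => ?_
  show (if h : ((Fin.castLE hrm i : Fin m) : ℕ) < r then y ⟨_, h⟩ else 0) = y i
  simp only [Fin.coe_castLE]
  rw [dif_pos i.isLt]

lemma embedL_projL (hrm : r ≤ m) (x : EuclideanSpace ℝ (Fin m))
    (hx : ∀ j : Fin m, r ≤ (j : ℕ) → x j = 0) :
    embedL m r hrm (projL m r hrm x) = x :=
  ((mem_range_embedL hrm x).mpr hx).choose_spec.symm ▸ by
    obtain ⟨y, rfl⟩ := (mem_range_embedL hrm x).mpr hx
    rw [projL_embedL]

lemma inner_projL (hrm : r ≤ m) (a b : EuclideanSpace ℝ (Fin m))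
    (ha : ∀ j : Fin m, r ≤ (j : ℕ) → a j = 0) :
    ⟪projL m r hrm a, projL m r hrm b⟫ = ⟪a, b⟫ := by
  simp only [PiLp.inner_apply, RCLike.inner_apply, conj_trivial]
  rw [show (∑ x, b.ofLp x * a.ofLp x) = ∑ j, a j * b j from Finset.sum_congr rfl fun _ _ => mul_comm _ _,
    ← tail_sum hrm a b ha]
  exact Finset.sum_congr rfl fun _ _ => mul_comm _ _

/-- Let `1 ≤ r ≤ m` and let `Λ, Λ'` be rank-`r` lattices in `ℝ^m`
contained in the subspace `ℝ^r × {0}`.  If `Λ' = g(Λ)` for some `g ∈ CO_m(ℝ)`, then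
there is `g' ∈ CO_r(ℝ)` with `Λ' = (g' × id)(Λ)`, where `g' × id` acts as `g'` on the
first `r` coordinates and as the identity on the remaining ones. -/
theorem stmt17 (m r : ℕ) (hr : 1 ≤ r) (hrm : r ≤ m)
    (Λ Λ' : AddSubgroup (EuclideanSpace ℝ (Fin m)))
    (hΛ : IsLatticeOfRank m r Λ) (hΛ' : IsLatticeOfRank m r Λ')
    (hΛ0 : ∀ x ∈ Λ, ∀ j : Fin m, r ≤ (j : ℕ) → x j = 0)
    (hΛ'0 : ∀ x ∈ Λ', ∀ j : Fin m, r ≤ (j : ℕ) → x j = 0)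
    (g : EuclideanSpace ℝ (Fin m) →ₗ[ℝ] EuclideanSpace ℝ (Fin m))
    (hg : IsCO g) (hgΛ : Λ' = AddSubgroup.map g.toAddMonoidHom Λ) :
    ∃ (g' : EuclideanSpace ℝ (Fin r) →ₗ[ℝ] EuclideanSpace ℝ (Fin r))
      (G : EuclideanSpace ℝ (Fin m) →ₗ[ℝ] EuclideanSpace ℝ (Fin m)),
      IsCO g' ∧
      (∀ (x : EuclideanSpace ℝ (Fin m)) (j : Fin m),
        G x j = if hj : (j : ℕ) < r then
            g' (WithLp.toLp 2 (fun i : Fin r => x (Fin.castLE hrm i))) ⟨(j : ℕ), hj⟩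
          else x j) ∧
      Λ' = AddSubgroup.map G.toAddMonoidHom Λ := by
  obtain ⟨v, hv, hvΛ⟩ := hΛ
  obtain ⟨c, k, hc, hk, hgck⟩ := hg
  set e := embedL m r hrm with he
  set p := projL m r hrm with hp
  -- the subspace V = range e
  set V : Submodule ℝ (EuclideanSpace ℝ (Fin m)) := LinearMap.range e with hVdef
  have hΛV : ∀ x ∈ Λ, x ∈ V := fun x hx => (mem_range_embedL hrm x).mpr (hΛ0 x hx)
  -- V = span of range v
  have hvmem : ∀ i, v i ∈ Λ := fun i => hvΛ ▸ AddSubgroup.subset_closure ⟨i, rfl⟩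
  have hWV : Submodule.span ℝ (Set.range v) ≤ V :=
    Submodule.span_le.mpr (fun x ⟨i, hi⟩ => hi ▸ hΛV _ (hvmem i))
  have hfinV : Module.finrank ℝ V = r := by
    rw [hVdef, LinearMap.finrank_range_of_inj, finrank_euclideanSpace_fin]
    intro a b hab
    have := congrArg (projL m r hrm) hab
    rwa [projL_embedL, projL_embedL] at this
  have hVW : V = Submodule.span ℝ (Set.range v) := by
    refine (Submodule.eq_of_le_of_finrank_le hWV ?_).symm
    rw [hfinV, finrank_span_eq_card hv, Fintype.card_fin]
  -- span of Λ is V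
  have hspanΛ : ∀ x ∈ Λ, ∀ u, u ∈ V → True := fun _ _ _ _ => trivial
  have hΛspan : (Λ : Set (EuclideanSpace ℝ (Fin m))) ⊆ Submodule.span ℝ (Set.range v) := by
    intro x hx
    exact hVW ▸ hΛV x hx
  -- k maps V into V
  have hkΛ : ∀ x ∈ Λ, k x ∈ V := by
    intro x hx
    have hgx : g x ∈ Λ' := hgΛ ▸ AddSubgroup.mem_map.mpr ⟨x, hx, rfl⟩
    have hgxV : g x ∈ V := (mem_range_embedL hrm _).mpr (hΛ'0 _ hgx)
    have : k x = c⁻¹ • g x := by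
      rw [hgck]; simp [smul_smul, inv_mul_cancel₀ hc]
    rw [this]
    exact V.smul_mem _ hgxV
  have hkV : ∀ u ∈ V, k u ∈ V := by
    intro u hu
    rw [hVW] at hu
    have : Submodule.span ℝ (Set.range v) ≤ Submodule.comap k V :=
      Submodule.span_le.mpr (fun x ⟨i, hi⟩ => hi ▸ hkΛ _ (hvmem i))
    exact this hu
  -- the restricted maps
  set k' : EuclideanSpace ℝ (Fin r) →ₗ[ℝ] EuclideanSpace ℝ (Fin r) := p ∘ₗ k ∘ₗ e with hk'
  set g' : EuclideanSpace ℝ (Fin r) →ₗ[ℝ] EuclideanSpace ℝ (Fin r) := p ∘ₗ g ∘ₗ e with hg'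
  have heV : ∀ y, e y ∈ V := fun y => ⟨y, rfl⟩
  have hg'CO : IsCO g' := by
    refine ⟨c, k', hc, ?_, ?_⟩
    · intro y z
      have h1 : k (e y) ∈ V := hkV _ (heV y)
      have h2 : k (e z) ∈ V := hkV _ (heV z)
      show ⟪p (k (e y)), p (k (e z))⟫ = ⟪y, z⟫
      rw [inner_projL hrm _ _ ((mem_range_embedL hrm _).mp h1), hk,
        ← inner_projL hrm _ _ ((mem_range_embedL hrm _).mp (heV y)),
        projL_embedL, projL_embedL]
    · refine LinearMap.ext fun y => ?_
      show p (g (e y)) = c • (p (k (e y)))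
      rw [hgck]
      simp [LinearMap.smul_apply, _root_.map_smul]
  -- G
  set G : EuclideanSpace ℝ (Fin m) →ₗ[ℝ] EuclideanSpace ℝ (Fin m) :=
    e ∘ₗ g' ∘ₗ p + (LinearMap.id - e ∘ₗ p) with hG
  have hGspec : ∀ (x : EuclideanSpace ℝ (Fin m)) (j : Fin m),
      G x j = if hj : (j : ℕ) < r then
          g' (WithLp.toLp 2 (fun i : Fin r => x (Fin.castLE hrm i))) ⟨(j : ℕ), hj⟩
        else x j := by
    intro x j
    show e (g' (p x)) j + (x j - e (p x) j) = _
    by_cases hj : (j : ℕ) < r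
    · rw [dif_pos hj]
      show (if h : (j : ℕ) < r then g' (p x) ⟨j, h⟩ else 0) + (x j - (if h : (j : ℕ) < r then p x ⟨j, h⟩ else 0)) = _
      rw [dif_pos hj, dif_pos hj]
      have : p x ⟨(j : ℕ), hj⟩ = x j := congrArg x (Fin.ext rfl)
      rw [this]
      ring_nf
      rfl
    · rw [dif_neg hj]
      show (if h : (j : ℕ) < r then g' (p x) ⟨j, h⟩ else 0) + (x j - (if h : (j : ℕ) < r then p x ⟨j, h⟩ else 0)) = x j
      rw [dif_neg hj, dif_neg hj]
      ring
  have hGg : ∀ x ∈ Λ, G x = g x := by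
    intro x hx
    have hx0 := hΛ0 x hx
    have hgx : g x ∈ Λ' := hgΛ ▸ AddSubgroup.mem_map.mpr ⟨x, hx, rfl⟩
    have hgx0 := hΛ'0 _ hgx
    refine PiLp.ext fun j => ?_
    rw [hGspec x j]
    by_cases hj : (j : ℕ) < r
    · rw [dif_pos hj]
      show p (g (e (p x))) ⟨(j : ℕ), hj⟩ = g x j
      rw [embedL_projL hrm x hx0]
      exact congrArg (g x) (Fin.ext rfl)
    · rw [dif_neg hj]
      rw [hx0 j (Nat.not_lt.mp hj), hgx0 j (Nat.not_lt.mp hj)]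
  refine ⟨g', G, hg'CO, hGspec, ?_⟩
  rw [hgΛ]
  ext y
  simp only [AddSubgroup.mem_map, LinearMap.toAddMonoidHom_coe]
  constructor
  · rintro ⟨x, hx, rfl⟩; exact ⟨x, hx, hGg x hx⟩
  · rintro ⟨x, hx, rfl⟩; exact ⟨x, hx, (hGg x hx).symm⟩
end

section
/- Let Λ be a lattice of rank 2 in ℂ, i.e. an additive subgroup Λ = ℤw₁ + ℤw₂ with w₁, w₂ ∈ ℂ linearly independent over ℝ. Then there exist c ∈ ℂ with c ≠ 0 and ρ ∈ D₁ such that Λ = c·(ℤ + ℤρ), where D₁ = {ρ ∈ ℂ : Im ρ > 0, |ρ| ≤ 1, |ρ − 1| ≥ 1, |ρ + 1| ≥ 1}. -/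
/-- The fundamental region
`D₁ = {ρ ∈ ℂ : Im ρ > 0, |ρ| ≤ 1, |ρ − 1| ≥ 1, |ρ + 1| ≥ 1}`. -/
def D1 : Set ℂ :=
  {ρ : ℂ | 0 < ρ.im ∧ ‖ρ‖ ≤ 1 ∧
    1 ≤ ‖ρ - 1‖ ∧ 1 ≤ ‖ρ + 1‖}

open Complex AddSubgroup UpperHalfPlane Modular

/-- A `ℤ`-linear combination of two generators lies in the closure. -/
lemma mem_closure_pairX (x y z : ℂ) (m n : ℤ) (hz : z = m * x + n * y) :
    z ∈ AddSubgroup.closure ({x, y} : Set ℂ) := by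
  subst hz
  have hx : x ∈ AddSubgroup.closure ({x, y} : Set ℂ) :=
    AddSubgroup.subset_closure (by simp)
  have hy : y ∈ AddSubgroup.closure ({x, y} : Set ℂ) :=
    AddSubgroup.subset_closure (by simp)
  have h1 : (m : ℂ) * x = m • x := by simp [zsmul_eq_mul]
  have h2 : (n : ℂ) * y = n • y := by simp [zsmul_eq_mul]
  rw [h1, h2]
  exact add_mem (zsmul_mem hx m) (zsmul_mem hy n)

lemma closure_pair_leX (x y u v : ℂ)
    (hx : x ∈ AddSubgroup.closure ({u, v} : Set ℂ))
    (hy : y ∈ AddSubgroup.closure ({u, v} : Set ℂ)) :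
    AddSubgroup.closure ({x, y} : Set ℂ) ≤ AddSubgroup.closure ({u, v} : Set ℂ) := by
  rw [AddSubgroup.closure_le]
  intro z hz
  rcases hz with rfl | rfl
  · exact hx
  · exact hy

/-- `-z⁻¹` lies in `D1` when `z` is in the standard fundamental domain. -/
lemma neg_inv_mem_D1 (z : ℂ) (him : 0 < z.im) (hn : 1 ≤ Complex.normSq z)
    (hre : |z.re| ≤ 1 / 2) : -z⁻¹ ∈ D1 := by
  have hz0 : z ≠ 0 := by
    intro h; rw [h] at him; simp at him
  have hnpos : 0 < Complex.normSq z := Complex.normSq_pos.mpr hz0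
  have habs : 1 ≤ ‖z‖ := by
    rw [← Complex.sq_norm] at hn
    nlinarith [norm_nonneg z]
  have habs0 : 0 < ‖z‖ := lt_of_lt_of_le one_pos habs
  obtain ⟨hre1, hre2⟩ := abs_le.mp hre
  refine ⟨?_, ?_, ?_, ?_⟩
  · simp only [neg_im, Complex.inv_im, neg_div, neg_neg]
    exact div_pos him hnpos
  · rw [norm_neg, norm_inv]
    exact inv_le_one_of_one_le₀ habs
  · have he : -z⁻¹ - 1 = -((1 + z) / z) := by field_simp; ring
    rw [he, norm_neg, norm_div]
    rw [le_div_iff₀ habs0, one_mul]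
    have : Complex.normSq z ≤ Complex.normSq (1 + z) := by
      simp only [Complex.normSq_apply, Complex.add_re, Complex.add_im, Complex.one_re,
        Complex.one_im]
      nlinarith
    calc ‖z‖ = Real.sqrt (Complex.normSq z) := Complex.norm_def z
      _ ≤ Real.sqrt (Complex.normSq (1 + z)) := Real.sqrt_le_sqrt this
      _ = ‖1 + z‖ := (Complex.norm_def _).symm
  · have he : -z⁻¹ + 1 = (z - 1) / z := by field_simp; ring
    rw [he, norm_div, le_div_iff₀ habs0, one_mul]
    have : Complex.normSq z ≤ Complex.normSq (z - 1) := by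
      simp only [Complex.normSq_apply, Complex.sub_re, Complex.sub_im, Complex.one_re,
        Complex.one_im]
      nlinarith
    calc ‖z‖ = Real.sqrt (Complex.normSq z) := Complex.norm_def z
      _ ≤ Real.sqrt (Complex.normSq (z - 1)) := Real.sqrt_le_sqrt this
      _ = ‖z - 1‖ := (Complex.norm_def _).symm

/-- The key reduction: a positively oriented basis can be normalised into `D1`. -/
lemma key_reduction (z₁ z₂ : ℂ) (hz₁ : z₁ ≠ 0) (hpos : 0 < (z₂ / z₁).im) :
    ∃ (c ρ : ℂ), c ≠ 0 ∧ ρ ∈ D1 ∧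
      ((AddSubgroup.closure {z₁, z₂} : AddSubgroup ℂ) : Set ℂ) =
        (fun z : ℂ => c * z) '' ((AddSubgroup.closure {1, ρ} : AddSubgroup ℂ) : Set ℂ) := by
  set τ : ℍ := ⟨z₂ / z₁, hpos⟩ with hτ
  obtain ⟨g, hg⟩ := ModularGroup.exists_smul_mem_fd τ
  set a : ℤ := g 0 0 with ha
  set b : ℤ := g 0 1 with hb
  set c : ℤ := g 1 0 with hc
  set d : ℤ := g 1 1 with hd
  have hdet : a * d - b * c = 1 := by
    have := Matrix.SpecialLinearGroup.det_coe g
    rw [Matrix.det_fin_two] at this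
    rw [ha, hb, hc, hd]; linarith [this]
  set u : ℂ := (a : ℂ) * z₂ + b * z₁ with hu
  set v : ℂ := (c : ℂ) * z₂ + d * z₁ with hv
  have hden : denom g τ ≠ 0 := denom_ne_zero g τ
  have hdeneq : (denom g τ : ℂ) = (c : ℂ) * (z₂ / z₁) + d := by
    simp [UpperHalfPlane.denom, ModularGroup.coe_apply_complex, hτ, hc, hd]
  have hv0 : v ≠ 0 := by
    have : v = ((c : ℂ) * (z₂ / z₁) + d) * z₁ := by field_simp [hv]; rw [hv]; ring
    rw [this, ← hdeneq]
    exact mul_ne_zero hden hz₁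
  have hz' : ((g • τ : ℍ) : ℂ) = u / v := by
    have h1 : ((g • τ : ℍ) : ℂ) = UpperHalfPlane.num (↑g) τ / UpperHalfPlane.denom (↑g) τ :=
      UpperHalfPlane.coe_smul_of_det_pos (by simp) _
    rw [h1]
    have hnum : UpperHalfPlane.num (↑g) τ = (a : ℂ) * (z₂ / z₁) + b := by
      simp [UpperHalfPlane.num, ModularGroup.coe_apply_complex, hτ, ha, hb]
    have hden' : (c : ℂ) * (z₂ / z₁) + (d : ℂ) ≠ 0 := hdeneq ▸ hden
    rw [hnum, hdeneq, div_eq_div_iff hden' hv0, hu, hv]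
    field_simp
  have hz'0 : ((g • τ : ℍ) : ℂ) ≠ 0 := UpperHalfPlane.ne_zero _
  have hu0 : u ≠ 0 := by
    intro h0; rw [h0, zero_div] at hz'; exact hz'0 hz'
  refine ⟨u, -v / u, hu0, ?_, ?_⟩
  · have hρ : -v / u = -(((g • τ : ℍ) : ℂ))⁻¹ := by
      rw [hz', inv_div]
      field_simp
    rw [hρ]
    have h1 : 0 < ((g • τ : ℍ) : ℂ).im := (g • τ).im_pos
    obtain ⟨hfd1, hfd2⟩ := hg
    exact neg_inv_mem_D1 _ h1 hfd1 hfd2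
  · have hdetC : (a : ℂ) * d - b * c = 1 := by exact_mod_cast hdet
    have e1 : AddSubgroup.closure ({z₁, z₂} : Set ℂ) = AddSubgroup.closure ({u, -v} : Set ℂ) := by
      apply le_antisymm
      · apply closure_pair_leX
        · exact mem_closure_pairX _ _ _ (-c) (-a)
            (by push_cast [hu, hv]; linear_combination (-z₁) * hdetC)
        · exact mem_closure_pairX _ _ _ d b
            (by push_cast [hu, hv]; linear_combination (-z₂) * hdetC)
      · apply closure_pair_leX
        · exact mem_closure_pairX _ _ _ b a (by push_cast [hu, hv]; ring)
        · exact mem_closure_pairX _ _ _ (-d) (-c) (by push_cast [hu, hv]; ring)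
    have hmul : u * (-v / u) = -v := by field_simp
    have himg : (AddSubgroup.closure ({1, -v / u} : Set ℂ)).map (AddMonoidHom.mulLeft u)
        = AddSubgroup.closure ({u, -v} : Set ℂ) := by
      rw [AddMonoidHom.map_closure]
      congr 1
      rw [Set.image_insert_eq, Set.image_singleton]
      simp only [AddMonoidHom.coe_mulLeft, mul_one, hmul]
    rw [e1, ← himg, AddSubgroup.coe_map]
    rfl

/-- For every rank-2 lattice `Λ = ℤw₁ + ℤw₂` in `ℂ` (with `w₁, w₂`
linearly independent over `ℝ`) there exist `c ≠ 0` and `ρ ∈ D₁` such that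
`Λ = c·(ℤ + ℤρ)`. -/
theorem stmt18 (w₁ w₂ : ℂ) (h : LinearIndependent ℝ ![w₁, w₂]) :
    ∃ (c ρ : ℂ), c ≠ 0 ∧ ρ ∈ D1 ∧
      ((AddSubgroup.closure {w₁, w₂} : AddSubgroup ℂ) : Set ℂ) =
        (fun z : ℂ => c * z) '' ((AddSubgroup.closure {1, ρ} : AddSubgroup ℂ) : Set ℂ) := by
  have h' := LinearIndependent.pair_iff.mp h
  have hw₁ : w₁ ≠ 0 := by
    intro hw; obtain ⟨h1, -⟩ := h' 1 0 (by simp [hw]); simp at h1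
  have hw₂ : w₂ ≠ 0 := by
    intro hw; obtain ⟨-, h2⟩ := h' 0 1 (by simp [hw]); simp at h2
  have him : (w₂ / w₁).im ≠ 0 := by
    intro h0
    set r : ℝ := (w₂ / w₁).re with hr
    have hq : w₂ / w₁ = (r : ℂ) := by apply Complex.ext <;> simp [h0, hr]
    have hw : w₂ = (r : ℂ) * w₁ := by
      rw [← hq]; field_simp
    obtain ⟨-, h2⟩ := h' r (-1) (by
      simp only [Matrix.cons_val_zero, Matrix.cons_val_one, Matrix.head_cons,
        Complex.real_smul, neg_smul, one_smul]
      rw [hw]; push_cast; ring)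
    norm_num at h2
  rcases lt_or_gt_of_ne him with hneg | hpos
  · -- swap the generators
    have hpos' : 0 < (w₁ / w₂).im := by
      have : w₁ / w₂ = (w₂ / w₁)⁻¹ := by
        rw [← one_div, div_div_eq_mul_div, one_mul]
      rw [this, Complex.inv_im]
      have hns : 0 < Complex.normSq (w₂ / w₁) := by
        apply Complex.normSq_pos.mpr
        exact div_ne_zero hw₂ hw₁
      exact div_pos (by linarith) hns
    obtain ⟨c, ρ, hc, hρ, heq⟩ := key_reduction w₂ w₁ hw₂ hpos'
    refine ⟨c, ρ, hc, hρ, ?_⟩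
    rw [Set.pair_comm w₁ w₂]
    exact heq
  · exact key_reduction w₁ w₂ hw₁ hpos
end
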